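/- arXiv:1103.1650 — 6 statements merged into one kernel-verified Lean document; each statement's English description precedes it below -/
import Mathlib

section
/- Let μ be a probability measure with countable support on Homeo⁺(ℝ) that is symmetric and irreducible. Then every non-vanishing P-invariant Radon measure ν on the real line is bi-infinite, i.e. ν((x,∞)) = ∞ and ν((−∞,x)) = ∞ for every x ∈ ℝ. -/
open scoped NNReal ENNReal
open MeasureTheory Filter Topology Set Function

noncomputable section

/-- The group `Homeo⁺(ℝ)` of orientation-preserving homeomorphisms of the real line,
modelled as the group of order-isomorphisms of `ℝ`: an orientation-preserving
homeomorphism of `ℝ` is precisely a strictly increasing bijection of `ℝ`, i.e. an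
order isomorphism (and every order isomorphism of `ℝ` is a homeomorphism). -/
abbrev H : Type := ℝ ≃o ℝ

lemma Hmeas (g : H) : Measurable (⇑g) := g.continuous.measurable

lemma real_key (a m : ℝ) :
    Real.exp (-m) * (1 + m) ≤ Real.exp (-a) + Real.exp (-m) * a := by
  have h := Real.add_one_le_exp (m - a)
  have e : Real.exp (-a) = Real.exp (-m) * Real.exp (m - a) := by
    rw [← Real.exp_add]; ring_nf
  nlinarith [Real.exp_pos (-m), Real.exp_pos (m - a)]

lemma real_key' (a m : ℝ) (hne : a ≠ m) :
    ∃ ε : ℝ, 0 < ε ∧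
      Real.exp (-m) * (1 + m) + ε ≤ Real.exp (-a) + Real.exp (-m) * a := by
  refine ⟨Real.exp (-a) + Real.exp (-m) * a - Real.exp (-m) * (1 + m), ?_, by ring_nf; rfl⟩
  have h := Real.add_one_lt_exp (x := m - a) (by intro h; apply hne; linarith)
  have e : Real.exp (-a) = Real.exp (-m) * Real.exp (m - a) := by
    rw [← Real.exp_add]; ring_nf
  nlinarith [Real.exp_pos (-m), Real.exp_pos (m - a)]

-- ENNReal per-term inequality
lemma enn_key (A M : ℝ≥0∞) (hA : A ≠ ∞) (hM : M ≠ ∞) :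
    ENNReal.ofReal (Real.exp (-M.toReal)) * (1 + M) ≤
      ENNReal.ofReal (Real.exp (-A.toReal)) +
        ENNReal.ofReal (Real.exp (-M.toReal)) * A := by
  set a := A.toReal; set m := M.toReal
  have hA' : A = ENNReal.ofReal a := (ENNReal.ofReal_toReal hA).symm
  have hM' : M = ENNReal.ofReal m := (ENNReal.ofReal_toReal hM).symm
  rw [hA', hM', ← ENNReal.ofReal_one, ← ENNReal.ofReal_add one_pos.le ENNReal.toReal_nonneg,
    ← ENNReal.ofReal_mul (Real.exp_pos _).le, ← ENNReal.ofReal_mul (Real.exp_pos _).le,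
    ← ENNReal.ofReal_add (Real.exp_pos _).le (by positivity)]
  exact ENNReal.ofReal_le_ofReal (real_key a m)

lemma enn_key' (A M : ℝ≥0∞) (hA : A ≠ ∞) (hM : M ≠ ∞) (ε : ℝ) (hε : 0 ≤ ε)
    (hle : Real.exp (-M.toReal) * (1 + M.toReal) + ε ≤
      Real.exp (-A.toReal) + Real.exp (-M.toReal) * A.toReal) :
    ENNReal.ofReal (Real.exp (-M.toReal)) * (1 + M) + ENNReal.ofReal ε ≤
      ENNReal.ofReal (Real.exp (-A.toReal)) +
        ENNReal.ofReal (Real.exp (-M.toReal)) * A := by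
  set a := A.toReal; set m := M.toReal
  have hA' : A = ENNReal.ofReal a := (ENNReal.ofReal_toReal hA).symm
  have hM' : M = ENNReal.ofReal m := (ENNReal.ofReal_toReal hM).symm
  rw [hA', hM', ← ENNReal.ofReal_one,
    ← ENNReal.ofReal_add one_pos.le ENNReal.toReal_nonneg,
    ← ENNReal.ofReal_mul (Real.exp_pos _).le, ← ENNReal.ofReal_mul (Real.exp_pos _).le,
    ← ENNReal.ofReal_add (by positivity) hε,
    ← ENNReal.ofReal_add (Real.exp_pos _).le (by positivity)]
  exact ENNReal.ofReal_le_ofReal hle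

lemma aux_ae (μ : H → ℝ≥0)
    (hcount : {g : H | μ g ≠ 0}.Countable)
    (hprob : ∑' g : H, (μ g : ℝ≥0∞) = 1)
    (ν : Measure ℝ)
    (hinv : Measure.sum (fun g : H => (μ g : ℝ≥0∞) • ν.map g) = ν)
    (F : ℝ → ℝ≥0∞) (hFmeas : Measurable F) (hFfin : ∀ t, F t ≠ ∞)
    (hharm : ∀ t : ℝ, F t =
      ∑' g : {g : H | μ g ≠ 0}, (μ (g : H) : ℝ≥0∞) * F ((g : H) t))
    (hsub : ∀ s : ℝ, 0 < s → ν {t | F t < ENNReal.ofReal s} ≤ ENNReal.ofReal s) :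
    ∀ᵐ t ∂ν, ∀ g : H, μ g ≠ 0 → F (g t) = F t := by
  classical
  haveI : Countable ↥{g : H | μ g ≠ 0} := hcount.to_subtype
  set S := {g : H | μ g ≠ 0} with hS
  set h : ℝ → ℝ≥0∞ := fun t => ENNReal.ofReal (Real.exp (-(F t).toReal)) with hh
  have hmeash : Measurable h :=
    ENNReal.measurable_ofReal.comp (Real.measurable_exp.comp hFmeas.ennreal_toReal.neg)
  have h_le_one : ∀ t, h t ≤ 1 := by
    intro t
    simp only [hh]
    rw [← ENNReal.ofReal_one]
    exact ENNReal.ofReal_le_ofReal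
      (Real.exp_le_one_iff.2 (neg_nonpos.2 ENNReal.toReal_nonneg))
  have hhfin : ∀ t, h t ≠ ∞ := fun t => (lt_of_le_of_lt (h_le_one t) ENNReal.one_lt_top).ne
  have hhM : ∀ t, h t * F t ≠ ∞ := fun t => ENNReal.mul_ne_top (hhfin t) (hFfin t)
  set P : ℝ → ℝ≥0∞ := fun t => ∑' g : S, (μ (g : H) : ℝ≥0∞) * h ((g : H) t) with hP
  have hPmeas : Measurable P :=
    Measurable.ennreal_tsum fun g => (hmeash.comp (Hmeas g)).const_mul _
  have hprobS : ∑' g : S, (μ (g : H) : ℝ≥0∞) = 1 := by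
    rw [← hprob]
    have hsupp : Function.support (fun g : H => (μ g : ℝ≥0∞)) ⊆ S := by
      intro g hg
      simp only [Function.mem_support, ne_eq, ENNReal.coe_eq_zero] at hg
      exact hg
    exact tsum_subtype_eq_of_support_subset hsupp
  have hsum : ∀ t, P t + h t * F t =
      ∑' g : S, (μ (g : H) : ℝ≥0∞) * (h ((g : H) t) + h t * F ((g : H) t)) := by
    intro t
    have : ∀ g : S, (μ (g : H) : ℝ≥0∞) * (h ((g : H) t) + h t * F ((g : H) t)) =
        (μ (g : H) : ℝ≥0∞) * h ((g : H) t) + h t * ((μ (g : H) : ℝ≥0∞) * F ((g : H) t)) := by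
      intro g; ring
    rw [tsum_congr this, ENNReal.tsum_add, ENNReal.tsum_mul_left, ← hharm t]
  have hbase : ∀ t, h t + h t * F t = ∑' g : S, (μ (g : H) : ℝ≥0∞) * (h t * (1 + F t)) := by
    intro t
    rw [ENNReal.tsum_mul_right, hprobS, one_mul, mul_add, mul_one]
  have hperterm : ∀ t (g : S), h t * (1 + F t) ≤ h ((g : H) t) + h t * F ((g : H) t) :=
    fun t g => enn_key (F ((g : H) t)) (F t) (hFfin _) (hFfin _)
  have hpoint : ∀ t, h t ≤ P t := by
    intro t
    have step : h t + h t * F t ≤ P t + h t * F t := by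
      rw [hbase t, hsum t]
      exact ENNReal.tsum_le_tsum fun g => mul_le_mul_right (hperterm t g) _
    exact ENNReal.le_of_add_le_add_right (hhM t) step
  -- integral of h is finite
  have hInth : ∫⁻ t, h t ∂ν ≠ ∞ := by
    have hnn : 0 ≤ᵐ[ν] fun t => Real.exp (-(F t).toReal) :=
      ae_of_all _ fun t => (Real.exp_pos _).le
    have hmble : AEMeasurable (fun t => Real.exp (-(F t).toReal)) ν :=
      (Real.measurable_exp.comp hFmeas.ennreal_toReal.neg).aemeasurable
    have hlay := lintegral_eq_lintegral_meas_lt ν hnn hmble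
    simp only [hh]
    rw [hlay]
    have hbound : ∀ s ∈ Ioi (0:ℝ),
        ν {a | s < Real.exp (-(F a).toReal)} ≤
          (Ioo (0:ℝ) 1).indicator (fun s => ENNReal.ofReal (2 * s ^ (-(2:ℝ)⁻¹))) s := by
      intro s hs
      rcases lt_or_ge s 1 with hs1 | hs1
      · have hmem : s ∈ Ioo (0:ℝ) 1 := ⟨hs, hs1⟩
        rw [indicator_of_mem hmem]
        have hsetsub : {a | s < Real.exp (-(F a).toReal)} ⊆
            {t | F t < ENNReal.ofReal (-Real.log s)} := by
          intro a ha
          have h1 : Real.log s < -(F a).toReal := by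
            have := Real.log_lt_log hs ha
            rwa [Real.log_exp] at this
          have h2 : (F a).toReal < -Real.log s := by linarith
          exact (ENNReal.lt_ofReal_iff_toReal_lt (hFfin a)).2 h2
        have hlogpos : 0 < -Real.log s := by
          have := Real.log_neg hs hs1
          linarith
        refine le_trans (le_trans (measure_mono hsetsub) (hsub _ hlogpos)) ?_
        apply ENNReal.ofReal_le_ofReal
        -- -log s ≤ 2 * s ^ (-(2⁻¹))
        have hy : (0:ℝ) < s ^ (-(2:ℝ)⁻¹) := Real.rpow_pos_of_pos hs _
        have hlog : Real.log (s ^ (-(2:ℝ)⁻¹)) = (-(2:ℝ)⁻¹) * Real.log s :=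
          Real.log_rpow hs _
        have hle : Real.log (s ^ (-(2:ℝ)⁻¹)) ≤ s ^ (-(2:ℝ)⁻¹) - 1 :=
          Real.log_le_sub_one_of_pos hy
        nlinarith [hy]
      · have : {a | s < Real.exp (-(F a).toReal)} = ∅ := by
          ext a
          simp only [mem_setOf_eq, mem_empty_iff_false, iff_false, not_lt]
          exact le_trans (Real.exp_le_one_iff.2 (neg_nonpos.2 ENNReal.toReal_nonneg))
            hs1
        simp [this]
    refine LT.lt.ne (α := ℝ≥0∞) ?_
    calc ∫⁻ s in Ioi (0:ℝ), ν {a | s < Real.exp (-(F a).toReal)}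
        ≤ ∫⁻ s in Ioi (0:ℝ),
            (Ioo (0:ℝ) 1).indicator (fun s => ENNReal.ofReal (2 * s ^ (-(2:ℝ)⁻¹))) s := by
          refine setLIntegral_mono ?_ hbound
          exact (ENNReal.measurable_ofReal.comp
            (((measurable_id.pow measurable_const).const_mul 2))).indicator measurableSet_Ioo
      _ = ∫⁻ s in Ioo (0:ℝ) 1, ENNReal.ofReal (2 * s ^ (-(2:ℝ)⁻¹)) := by
          rw [lintegral_indicator measurableSet_Ioo, Measure.restrict_restrict measurableSet_Ioo]
          congr 1
          rw [inter_eq_left.2 (Ioo_subset_Ioi_self)]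
      _ < ∞ := by
          have hint : IntegrableOn (fun s : ℝ => 2 * s ^ (-(2:ℝ)⁻¹)) (Ioo 0 1) := by
            have := (intervalIntegral.integrableOn_Ioo_rpow_iff (s := (-(2:ℝ)⁻¹))
              (t := (1:ℝ)) one_pos).2 (by norm_num)
            exact this.const_mul 2
          refine lt_of_le_of_lt (lintegral_mono fun s => ?_) hint.2
          exact Real.ofReal_le_enorm _
  -- ∫ P = ∫ h
  have hintP : ∫⁻ t, P t ∂ν = ∫⁻ t, h t ∂ν := by
    have step1 : ∫⁻ t, P t ∂ν = ∑' g : S, ∫⁻ t, (μ (g : H) : ℝ≥0∞) * h ((g : H) t) ∂ν := by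
      simp only [hP]
      exact lintegral_tsum fun g => ((hmeash.comp (Hmeas g)).const_mul _).aemeasurable
    have step2 : ∀ g : S, ∫⁻ t, (μ (g : H) : ℝ≥0∞) * h ((g : H) t) ∂ν =
        (μ (g : H) : ℝ≥0∞) * ∫⁻ x, h x ∂(ν.map (g : H)) := by
      intro g
      have hm : Measurable fun t : ℝ => h ((g : H) t) := hmeash.comp (Hmeas (g : H))
      rw [lintegral_const_mul _ hm, lintegral_map hmeash (Hmeas (g : H))]
    have hsupp2 : Function.support
        (fun g : H => (μ g : ℝ≥0∞) * ∫⁻ x, h x ∂(ν.map g)) ⊆ S := by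
      intro g hg
      simp only [Function.mem_support, ne_eq] at hg
      intro hzero
      exact hg (by simp [hzero])
    calc ∫⁻ t, P t ∂ν
        = ∑' g : S, (μ (g : H) : ℝ≥0∞) * ∫⁻ x, h x ∂(ν.map (g : H)) := by
          rw [step1]; exact tsum_congr step2
      _ = ∑' g : H, (μ g : ℝ≥0∞) * ∫⁻ x, h x ∂(ν.map g) :=
          tsum_subtype_eq_of_support_subset hsupp2
      _ = ∫⁻ x, h x ∂(Measure.sum (fun g : H => (μ g : ℝ≥0∞) • ν.map g)) := by
          rw [lintegral_sum_measure]
          exact tsum_congr fun g => by rw [lintegral_smul_measure, smul_eq_mul]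
      _ = ∫⁻ t, h t ∂ν := by rw [hinv]
  -- difference has zero integral
  have hD0 : ∫⁻ t, (P t - h t) ∂ν = 0 := by
    have hPsplit : (fun t => P t) = fun t => h t + (P t - h t) := by
      funext t; rw [add_tsub_cancel_of_le (hpoint t)]
    have : ∫⁻ t, h t ∂ν + ∫⁻ t, (P t - h t) ∂ν = ∫⁻ t, h t ∂ν + 0 := by
      rw [← lintegral_add_left hmeash, ← hPsplit, hintP, add_zero]
    exact (ENNReal.add_right_inj hInth).1 this
  have haeD : ∀ᵐ t ∂ν, P t - h t = 0 := by
    have := (lintegral_eq_zero_iff (hPmeas.sub hmeash)).1 hD0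
    filter_upwards [this] with t ht using ht
  filter_upwards [haeD] with t ht
  have hPt : P t = h t := le_antisymm (tsub_eq_zero_iff_le.1 ht) (hpoint t)
  intro g₀ hg₀
  by_contra hne
  have hamne : (F (g₀ t)).toReal ≠ (F t).toReal := by
    intro he
    exact hne (by
      rw [← ENNReal.ofReal_toReal (hFfin (g₀ t)), ← ENNReal.ofReal_toReal (hFfin t), he])
  obtain ⟨ε, hεpos, hεle⟩ := real_key' ((F (g₀ t)).toReal) ((F t).toReal) hamne
  haveI : DecidableEq ↥S := Classical.decEq _
  set g₀' : ↥S := ⟨g₀, hg₀⟩ with hg₀'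
  -- strict per-term inequality for g₀
  have hstrict : h t * (1 + F t) + ENNReal.ofReal ε ≤
      h (g₀ t) + h t * F (g₀ t) :=
    enn_key' (F (g₀ t)) (F t) (hFfin _) (hFfin _) ε hεpos.le hεle
  have hchain : h t + h t * F t + (μ g₀ : ℝ≥0∞) * ENNReal.ofReal ε ≤
      h t + h t * F t := by
    have e1 : h t + h t * F t + (μ g₀ : ℝ≥0∞) * ENNReal.ofReal ε =
        ∑' g : S, ((μ (g : H) : ℝ≥0∞) * (h t * (1 + F t)) +
          (if g = g₀' then (μ g₀ : ℝ≥0∞) * ENNReal.ofReal ε else 0)) := by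
      rw [ENNReal.tsum_add, tsum_ite_eq, ← hbase t]
    have e2 : ∀ g : S, ((μ (g : H) : ℝ≥0∞) * (h t * (1 + F t)) +
        (if g = g₀' then (μ g₀ : ℝ≥0∞) * ENNReal.ofReal ε else 0)) ≤
        (μ (g : H) : ℝ≥0∞) * (h ((g : H) t) + h t * F ((g : H) t)) := by
      intro g
      by_cases hgg : g = g₀'
      · have key : (μ g₀ : ℝ≥0∞) * (h t * (1 + F t)) +
            (μ g₀ : ℝ≥0∞) * ENNReal.ofReal ε ≤
            (μ g₀ : ℝ≥0∞) * (h (g₀ t) + h t * F (g₀ t)) := by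
          rw [← mul_add]; exact mul_le_mul_right hstrict _
        rw [hgg, if_pos rfl]
        exact key
      · rw [if_neg hgg, add_zero]
        exact mul_le_mul_right (hperterm t g) _
    calc h t + h t * F t + (μ g₀ : ℝ≥0∞) * ENNReal.ofReal ε
        ≤ ∑' g : S, (μ (g : H) : ℝ≥0∞) * (h ((g : H) t) + h t * F ((g : H) t)) := by
          rw [e1]; exact ENNReal.tsum_le_tsum e2
      _ = P t + h t * F t := (hsum t).symm
      _ = h t + h t * F t := by rw [hPt]
  have hXfin : h t + h t * F t ≠ ∞ := by
    exact ENNReal.add_ne_top.2 ⟨hhfin t, hhM t⟩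
  have : (μ g₀ : ℝ≥0∞) * ENNReal.ofReal ε = 0 := by
    have h0 : h t + h t * F t + (μ g₀ : ℝ≥0∞) * ENNReal.ofReal ε ≤
        h t + h t * F t + 0 := by rwa [add_zero]
    have := (ENNReal.add_le_add_iff_left hXfin).1 h0
    exact le_antisymm this zero_le
  rcases mul_eq_zero.1 this with hc | hc
  · exact hg₀ (by exact_mod_cast hc)
  · exact (ENNReal.ofReal_pos.2 hεpos).ne' hc

lemma right_side (μ : H → ℝ≥0)
    (hcount : {g : H | μ g ≠ 0}.Countable)
    (hprob : ∑' g : H, (μ g : ℝ≥0∞) = 1)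
    (hsymm : ∀ g : H, μ g = μ g⁻¹)
    (hirr : ∀ x : ℝ, ∃ g ∈ Subgroup.closure {g : H | μ g ≠ 0}, g x ≠ x)
    (ν : Measure ℝ) [IsLocallyFiniteMeasure ν] (hν : ν ≠ 0)
    (hinv : Measure.sum (fun g : H => (μ g : ℝ≥0∞) • ν.map g) = ν) :
    ∀ x : ℝ, ν (Set.Ioi x) = ∞ := by
  classical
  intro x
  by_contra hfin
  set F : ℝ → ℝ≥0∞ := fun t => ν (Ici t) with hF
  have hFanti : Antitone F := fun a b hab => measure_mono (Ici_subset_Ici.2 hab)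
  have hFmeas : Measurable F := hFanti.measurable
  have hFfin : ∀ t, F t ≠ ∞ := by
    intro t
    have hsub : Ici t ⊆ Icc t x ∪ Ioi x := by
      intro y hy
      rcases le_or_gt y x with h | h
      · exact Or.inl ⟨hy, h⟩
      · exact Or.inr h
    have h1 : ν (Icc t x) ≠ ∞ := isCompact_Icc.measure_lt_top.ne
    exact ne_top_of_le_ne_top (ENNReal.add_ne_top.2 ⟨h1, hfin⟩)
      (le_trans (measure_mono hsub) (measure_union_le _ _))
  have hpre : ∀ (g : H) (t : ℝ), ⇑g ⁻¹' Ici t = Ici (g⁻¹ t) := by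
    intro g t
    ext y
    simp only [mem_preimage, mem_Ici]
    constructor
    · intro hy
      have := g.symm.monotone hy
      simp only [OrderIso.symm_apply_apply] at this; exact this
    · intro hy
      have := g.monotone hy
      have e : g ((g⁻¹ : H) t) = t := g.apply_symm_apply t
      rwa [e] at this
  have hkey : ∀ t : ℝ, F t = ∑' g : H, (μ g : ℝ≥0∞) * F (g⁻¹ t) := by
    intro t
    have hrw : F t = (Measure.sum fun g : H => (μ g : ℝ≥0∞) • ν.map g) (Ici t) := by
      rw [hinv]
    rw [hrw, Measure.sum_apply _ measurableSet_Ici]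
    refine tsum_congr fun g => ?_
    rw [Measure.smul_apply, smul_eq_mul, Measure.map_apply (Hmeas g) measurableSet_Ici,
      hpre g t]
  have hharm : ∀ t : ℝ, F t =
      ∑' g : {g : H | μ g ≠ 0}, (μ (g : H) : ℝ≥0∞) * F ((g : H) t) := by
    intro t
    have h1 : F t = ∑' g : H, (μ g : ℝ≥0∞) * F (g t) := by
      rw [hkey t]
      have h2 := (Equiv.inv H).tsum_eq (f := fun g : H => (μ g : ℝ≥0∞) * F (g⁻¹ t))
      rw [← h2]
      refine tsum_congr fun g => ?_
      simp only [Equiv.inv_apply, inv_inv]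
      rw [← hsymm g]
    rw [h1]
    refine (tsum_subtype_eq_of_support_subset ?_).symm
    intro g hg
    simp only [Function.mem_support, ne_eq] at hg
    intro h0
    exact hg (by simp [h0])
  have hsubl : ∀ s : ℝ, 0 < s → ν {t | F t < ENNReal.ofReal s} ≤ ENNReal.ofReal s := by
    intro s hs
    set A := {t : ℝ | F t < ENNReal.ofReal s} with hA
    have hAup : ∀ a ∈ A, ∀ b, a ≤ b → b ∈ A := fun a ha b hab =>
      lt_of_le_of_lt (hFanti hab) ha
    have hbnd : ∀ a ∈ A, ν (Ici a) ≤ ENNReal.ofReal s := fun a ha => (le_of_lt ha)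
    rcases eq_empty_or_nonempty A with hAe | ⟨a₀, ha₀⟩
    · simp [hAe]
    by_cases hex : ∃ a ∈ A, ∀ c ∈ A, a ≤ c
    · obtain ⟨a, haA, hamin⟩ := hex
      exact le_trans (measure_mono fun u hu => hamin u hu) (hbnd a haA)
    · push_neg at hex
      obtain ⟨e, he⟩ := exists_surjective_nat ℚ
      set c : ℕ → ℝ := fun n => if ((e n : ℝ)) ∈ A then (e n : ℝ) else a₀ with hc
      have hcA : ∀ n, c n ∈ A := by
        intro n
        rw [hc]
        by_cases h : ((e n : ℝ)) ∈ A
        · simpa [h] using h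
        · simpa [h] using ha₀
      have hcover : A ⊆ ⋃ n, A ∩ Ici (c n) := by
        intro a ha
        obtain ⟨c', hc'A, hc'lt⟩ := hex a ha
        obtain ⟨q, hq1, hq2⟩ := exists_rat_btwn hc'lt
        obtain ⟨n, hn⟩ := he q
        have hqA : ((q : ℝ)) ∈ A := hAup c' hc'A _ hq1.le
        have hcn : c n = (q : ℝ) := by
          show (if ((e n : ℝ)) ∈ A then ((e n : ℝ)) else a₀) = (q : ℝ)
          rw [hn, if_pos hqA]
        refine mem_iUnion.2 ⟨n, ha, ?_⟩
        rw [hcn]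
        exact mem_Ici.2 hq2.le
      have hdir : Directed (· ⊆ ·) (fun n => A ∩ Ici (c n)) := by
        intro m n
        rcases le_total (c m) (c n) with h | h
        · exact ⟨m, subset_rfl, inter_subset_inter_right _ (Ici_subset_Ici.2 h)⟩
        · exact ⟨n, inter_subset_inter_right _ (Ici_subset_Ici.2 h), subset_rfl⟩
      calc ν A ≤ ν (⋃ n, A ∩ Ici (c n)) := measure_mono hcover
        _ = ⨆ n, ν (A ∩ Ici (c n)) := hdir.measure_iUnion
        _ ≤ ENNReal.ofReal s := by
            refine iSup_le fun n => ?_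
            exact le_trans (measure_mono inter_subset_right) (hbnd _ (hcA n))
  -- a.e. invariance from the analytic core
  have hae := aux_ae μ hcount hprob ν hinv F hFmeas hFfin hharm hsubl
  set N := {t : ℝ | ¬ ∀ g : H, μ g ≠ 0 → F (g t) = F t} with hNdef
  have hN : ν N = 0 := ae_iff.1 hae
  -- splitting identity
  have hsplit : ∀ t u : ℝ, t ≤ u → F t = ν (Ico t u) + F u := by
    intro t u htu
    rw [hF]
    simp only
    rw [← Ico_union_Ici_eq_Ici htu, measure_union ?disj measurableSet_Ici]
    case disj =>
      rw [Set.disjoint_left]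
      rintro y ⟨_, hy2⟩ hy3
      exact absurd hy3 (not_le.2 hy2)
  have hzeroiff : ∀ t u : ℝ, t ≤ u → (F t = F u ↔ ν (Ico t u) = 0) := by
    intro t u htu
    constructor
    · intro he
      have h1 := hsplit t u htu
      rw [he] at h1
      have h2 : 0 + F u = ν (Ico t u) + F u := by rw [zero_add, ← h1]
      exact (ENNReal.add_left_inj (hFfin u)).1 h2.symm
    · intro h0
      rw [hsplit t u htu, h0, zero_add]
  -- upgrade to everywhere: moving right
  have hIco0 : ∀ g : H, μ g ≠ 0 → ∀ t : ℝ, t < g t → ν (Ico t (g t)) = 0 := by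
    intro g hg t hlt
    by_contra hpos
    set B := Ico t (g t) ∩ Nᶜ with hB
    have hBpos : ν B ≠ 0 := by
      intro h0
      apply hpos
      have hcov : Ico t (g t) ⊆ (Ico t (g t) ∩ N) ∪ B := by
        intro u hu
        rcases Classical.em (u ∈ N) with huN | huN
        · exact mem_union_left _ ⟨hu, huN⟩
        · exact mem_union_right _ ⟨hu, huN⟩
      refine measure_mono_null hcov (measure_union_null ?_ h0)
      exact measure_mono_null inter_subset_right hN
    have hBne : B.Nonempty := nonempty_of_measure_ne_zero hBpos
    have hgood : ∀ t' ∈ B, ν (Ico t' (g t)) = 0 := by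
      rintro t' ⟨⟨h1, h2⟩, hn⟩
      have hP : ∀ g' : H, μ g' ≠ 0 → F (g' t') = F t' := not_not.1 hn
      have heq : F (g t') = F t' := hP g hg
      have hlt' : t' < g t' := lt_of_lt_of_le h2 (g.monotone h1)
      have h0 : ν (Ico t' (g t')) = 0 := (hzeroiff t' (g t') hlt'.le).1 heq.symm
      exact measure_mono_null (Ico_subset_Ico_right (g.monotone h1)) h0
    have hBbd : BddBelow B := ⟨t, fun b hb => hb.1.1⟩
    set r := sInf B with hr
    have hrt : t ≤ r := le_csInf hBne fun b hb => hb.1.1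
    have hrlt : r < g t := by
      obtain ⟨b, hb⟩ := hBne
      exact lt_of_le_of_lt (csInf_le hBbd hb) hb.1.2
    have hIoo : ν (Ioo r (g t)) = 0 := by
      have hcseq : ∀ n : ℕ, ∃ cc ∈ B, cc < r + 1 / (n + 1) := by
        intro n
        exact (csInf_lt_iff hBbd hBne).1 (lt_add_of_pos_right _ (by positivity))
      choose cc hccB hcclt using hcseq
      have hcover : Ioo r (g t) ⊆ ⋃ n, Ico (cc n) (g t) := by
        rintro u ⟨hu1, hu2⟩
        obtain ⟨n, hn⟩ := exists_nat_one_div_lt (by linarith : (0:ℝ) < u - r)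
        refine mem_iUnion.2 ⟨n, ?_, hu2⟩
        have : cc n < u := by
          have := hcclt n
          have hnn : 1 / ((n:ℝ) + 1) < u - r := hn
          linarith
        exact this.le
      exact measure_mono_null hcover (measure_iUnion_null fun n => hgood _ (hccB n))
    have hsingle : ν {r} = 0 := by
      by_contra hr0
      have hrnotN : r ∉ N := by
        intro hrN
        exact hr0 (measure_mono_null (singleton_subset_iff.2 hrN) hN)
      have hrB : r ∈ B := ⟨⟨hrt, hrlt⟩, hrnotN⟩
      exact hr0 (measure_mono_null
        (singleton_subset_iff.2 (show r ∈ Ico r (g t) from ⟨le_rfl, hrlt⟩))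
        (hgood r hrB))
    apply hpos
    have hcov2 : Ico t (g t) ⊆ (Ico t (g t) ∩ N) ∪ ({r} ∪ Ioo r (g t)) := by
      intro u hu
      rcases Classical.em (u ∈ N) with huN | huN
      · exact mem_union_left _ ⟨hu, huN⟩
      · have huB : u ∈ B := ⟨hu, huN⟩
        have hru : r ≤ u := csInf_le hBbd huB
        rcases eq_or_lt_of_le hru with he | hlt2
        · exact mem_union_right _ (mem_union_left _ he.symm)
        · exact mem_union_right _ (mem_union_right _ ⟨hlt2, hu.2⟩)
    refine measure_mono_null hcov2 ?_
    refine measure_union_null (measure_mono_null inter_subset_right hN) ?_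
    exact measure_union_null hsingle hIoo
  -- moving left
  have hIco0' : ∀ g : H, μ g ≠ 0 → ∀ t : ℝ, g t < t → ν (Ico (g t) t) = 0 := by
    intro g hg t hlt
    have hg' : μ g⁻¹ ≠ 0 := by
      intro h0
      exact hg (by rw [hsymm g, h0])
    have he : (g⁻¹ : H) (g t) = t := g.symm_apply_apply t
    have := hIco0 g⁻¹ hg' (g t) (by rw [he]; exact hlt)
    rwa [he] at this
  -- invariance for the whole generated subgroup
  set K : Subgroup H :=
    { carrier := {k : H | ∀ t : ℝ, F (k t) = F t}
      one_mem' := fun _ => rfl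
      mul_mem' := by
        intro a b ha hb t
        have : (a * b) t = a (b t) := rfl
        rw [this, ha, hb]
      inv_mem' := by
        intro a ha t
        have h1 := ha ((a⁻¹ : H) t)
        have e : a ((a⁻¹ : H) t) = t := a.apply_symm_apply t
        rw [e] at h1
        exact h1.symm } with hK
  have hSK : {g : H | μ g ≠ 0} ⊆ K := by
    intro g hg t
    rcases lt_trichotomy t (g t) with hlt | heq | hgt
    · exact ((hzeroiff t (g t) hlt.le).2 (hIco0 g hg t hlt)).symm
    · rw [← heq]
    · exact (hzeroiff (g t) t hgt.le).2 (hIco0' g hg t hgt)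
  have hclosure : ∀ k ∈ Subgroup.closure {g : H | μ g ≠ 0}, ∀ t : ℝ, F (k t) = F t :=
    fun k hk => (Subgroup.closure_le K).2 hSK hk
  -- endgame
  have ht0ex : ∃ n : ℕ, F (-(n : ℝ)) ≠ 0 := by
    by_contra hall
    push_neg at hall
    have hcov : (univ : Set ℝ) ⊆ ⋃ n : ℕ, Ici (-(n : ℝ)) := by
      intro y _
      obtain ⟨n, hn⟩ := exists_nat_ge (-y)
      exact mem_iUnion.2 ⟨n, by simpa using neg_le.1 hn⟩
    have : ν univ = 0 := measure_mono_null hcov (measure_iUnion_null hall)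
    exact (Measure.measure_univ_pos.2 hν).ne' this
  obtain ⟨n₀, ht₀⟩ := ht0ex
  set t₀ : ℝ := -(n₀ : ℝ) with ht₀def
  have htend : Tendsto (fun n : ℕ => F (x + 1 + n)) atTop (nhds 0) := by
    have hanti : Antitone fun n : ℕ => Ici (x + 1 + (n : ℝ)) := by
      intro m n hmn
      exact Ici_subset_Ici.2 (by exact_mod_cast add_le_add_right (Nat.cast_le.2 hmn) _)
    have h1 := tendsto_measure_iInter_atTop (μ := ν)
      (fun n : ℕ => measurableSet_Ici.nullMeasurableSet) hanti
      ⟨0, by simpa using hFfin (x + 1 + 0)⟩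
    have hempty : ⋂ n : ℕ, Ici (x + 1 + (n : ℝ)) = ∅ := by
      ext y
      simp only [mem_iInter, mem_Ici, mem_empty_iff_false, iff_false, not_forall, not_le]
      obtain ⟨n, hn⟩ := exists_nat_gt (y - x - 1)
      exact ⟨n, by linarith⟩
    rw [hempty] at h1
    simp only [measure_empty] at h1; exact h1
  have hTex : ∀ᶠ n : ℕ in atTop, F (x + 1 + n) < F t₀ :=
    htend.eventually_lt_const (pos_iff_ne_zero.2 ht₀)
  obtain ⟨nT, hT⟩ := hTex.exists
  set T : ℝ := x + 1 + nT with hTdef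
  set C := {u : ℝ | t₀ ≤ u ∧ ν (Ico t₀ u) = 0} with hC
  have ht₀C : t₀ ∈ C := ⟨le_rfl, by simp⟩
  have hCT : ∀ u ∈ C, u < T := by
    rintro u ⟨hu1, hu2⟩
    have heq : F t₀ = F u := (hzeroiff t₀ u hu1).2 hu2
    by_contra hTu
    push_neg at hTu
    exact absurd (lt_of_lt_of_le hT (heq ▸ hFanti hTu)) (lt_irrefl _)
  have hbddC : BddAbove C := ⟨T, fun u hu => (hCT u hu).le⟩
  set s := sSup C with hs
  have hst₀ : t₀ ≤ s := le_csSup hbddC ht₀C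
  have hs0 : ν (Ico t₀ s) = 0 := by
    have hcseq : ∀ n : ℕ, ∃ u ∈ C, s - 1 / (n + 1) < u := by
      intro n
      exact (lt_csSup_iff hbddC ⟨t₀, ht₀C⟩).1 (by
        have : (0:ℝ) < 1 / (n + 1) := by positivity
        linarith)
    choose cc hccC hcclt using hcseq
    have hcover : Ico t₀ s ⊆ ⋃ n, Ico t₀ (cc n) := by
      rintro u ⟨hu1, hu2⟩
      obtain ⟨n, hn⟩ := exists_nat_one_div_lt (by linarith : (0:ℝ) < s - u)
      refine mem_iUnion.2 ⟨n, hu1, ?_⟩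
      have := hcclt n
      have hnn : 1 / ((n:ℝ) + 1) < s - u := hn
      linarith
    exact measure_mono_null hcover (measure_iUnion_null fun n => (hccC n).2)
  have hkeypos : ∀ w, s < w → ν (Ico s w) ≠ 0 := by
    intro w hw h0
    have hcov : Ico t₀ w ⊆ Ico t₀ s ∪ Ico s w := by
      rintro u ⟨hu1, hu2⟩
      rcases lt_or_ge u s with h | h
      · exact Or.inl ⟨hu1, h⟩
      · exact Or.inr ⟨h, hu2⟩
    have hw0 : ν (Ico t₀ w) = 0 :=
      measure_mono_null hcov (measure_union_null hs0 h0)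
    have : w ∈ C := ⟨le_trans hst₀ hw.le, hw0⟩
    exact absurd (le_csSup hbddC this) (not_le.2 hw)
  obtain ⟨k, hkcl, hks⟩ := hirr s
  rcases hks.lt_or_gt with hklt | hkgt
  · -- k s < s : use k⁻¹
    have hkinv : s < (k⁻¹ : H) s := by
      have := k.symm.strictMono hklt
      have e : (k.symm) (k s) = s := k.symm_apply_apply s
      rw [e] at this
      exact this
    have hmem : (k⁻¹ : H) ∈ Subgroup.closure {g : H | μ g ≠ 0} := inv_mem hkcl
    have heq : F ((k⁻¹ : H) s) = F s := hclosure _ hmem s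
    exact hkeypos _ hkinv ((hzeroiff s _ hkinv.le).1 heq.symm)
  · have heq : F (k s) = F s := hclosure _ hkcl s
    exact hkeypos _ hkgt ((hzeroiff s _ hkgt.le).1 heq.symm)

lemma left_side (μ : H → ℝ≥0)
    (hcount : {g : H | μ g ≠ 0}.Countable)
    (hprob : ∑' g : H, (μ g : ℝ≥0∞) = 1)
    (hsymm : ∀ g : H, μ g = μ g⁻¹)
    (hirr : ∀ x : ℝ, ∃ g ∈ Subgroup.closure {g : H | μ g ≠ 0}, g x ≠ x)
    (ν : Measure ℝ) [IsLocallyFiniteMeasure ν] (hν : ν ≠ 0)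
    (hinv : Measure.sum (fun g : H => (μ g : ℝ≥0∞) • ν.map g) = ν) :
    ∀ x : ℝ, ν (Set.Iio x) = ∞ := by
  classical
  intro x
  by_contra hfin
  set F : ℝ → ℝ≥0∞ := fun t => ν (Iic t) with hF
  have hFmono : Monotone F := fun a b hab => measure_mono (Iic_subset_Iic.2 hab)
  have hFmeas : Measurable F := hFmono.measurable
  have hFfin : ∀ t, F t ≠ ∞ := by
    intro t
    have hsub : Iic t ⊆ Iio x ∪ Icc x t := by
      intro y hy
      rcases lt_or_ge y x with h | h
      · exact Or.inl h
      · exact Or.inr ⟨h, hy⟩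
    have h1 : ν (Icc x t) ≠ ∞ := isCompact_Icc.measure_lt_top.ne
    exact ne_top_of_le_ne_top (ENNReal.add_ne_top.2 ⟨hfin, h1⟩)
      (le_trans (measure_mono hsub) (measure_union_le _ _))
  have hpre : ∀ (g : H) (t : ℝ), ⇑g ⁻¹' Iic t = Iic (g⁻¹ t) := by
    intro g t
    ext y
    simp only [mem_preimage, mem_Iic]
    constructor
    · intro hy
      have := g.symm.monotone hy
      simp only [OrderIso.symm_apply_apply] at this; exact this
    · intro hy
      have := g.monotone hy
      have e : g ((g⁻¹ : H) t) = t := g.apply_symm_apply t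
      rwa [e] at this
  have hkey : ∀ t : ℝ, F t = ∑' g : H, (μ g : ℝ≥0∞) * F (g⁻¹ t) := by
    intro t
    have hrw : F t = (Measure.sum fun g : H => (μ g : ℝ≥0∞) • ν.map g) (Iic t) := by
      rw [hinv]
    rw [hrw, Measure.sum_apply _ measurableSet_Iic]
    refine tsum_congr fun g => ?_
    rw [Measure.smul_apply, smul_eq_mul, Measure.map_apply (Hmeas g) measurableSet_Iic,
      hpre g t]
  have hharm : ∀ t : ℝ, F t =
      ∑' g : {g : H | μ g ≠ 0}, (μ (g : H) : ℝ≥0∞) * F ((g : H) t) := by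
    intro t
    have h1 : F t = ∑' g : H, (μ g : ℝ≥0∞) * F (g t) := by
      rw [hkey t]
      have h2 := (Equiv.inv H).tsum_eq (f := fun g : H => (μ g : ℝ≥0∞) * F (g⁻¹ t))
      rw [← h2]
      refine tsum_congr fun g => ?_
      simp only [Equiv.inv_apply, inv_inv]
      rw [← hsymm g]
    rw [h1]
    refine (tsum_subtype_eq_of_support_subset ?_).symm
    intro g hg
    simp only [Function.mem_support, ne_eq] at hg
    intro h0
    exact hg (by simp [h0])
  have hsubl : ∀ s : ℝ, 0 < s → ν {t | F t < ENNReal.ofReal s} ≤ ENNReal.ofReal s := by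
    intro s hs
    set A := {t : ℝ | F t < ENNReal.ofReal s} with hA
    have hAdn : ∀ a ∈ A, ∀ b, b ≤ a → b ∈ A := fun a ha b hab =>
      lt_of_le_of_lt (hFmono hab) ha
    have hbnd : ∀ a ∈ A, ν (Iic a) ≤ ENNReal.ofReal s := fun a ha => (le_of_lt ha)
    rcases eq_empty_or_nonempty A with hAe | ⟨a₀, ha₀⟩
    · simp [hAe]
    by_cases hex : ∃ a ∈ A, ∀ c ∈ A, c ≤ a
    · obtain ⟨a, haA, hamax⟩ := hex
      exact le_trans (measure_mono fun u hu => hamax u hu) (hbnd a haA)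
    · push_neg at hex
      obtain ⟨e, he⟩ := exists_surjective_nat ℚ
      set c : ℕ → ℝ := fun n => if ((e n : ℝ)) ∈ A then (e n : ℝ) else a₀ with hc
      have hcA : ∀ n, c n ∈ A := by
        intro n
        rw [hc]
        by_cases h : ((e n : ℝ)) ∈ A
        · simpa [h] using h
        · simpa [h] using ha₀
      have hcover : A ⊆ ⋃ n, A ∩ Iic (c n) := by
        intro a ha
        obtain ⟨c', hc'A, hc'lt⟩ := hex a ha
        obtain ⟨q, hq1, hq2⟩ := exists_rat_btwn hc'lt
        obtain ⟨n, hn⟩ := he q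
        have hqA : ((q : ℝ)) ∈ A := hAdn c' hc'A _ hq2.le
        have hcn : c n = (q : ℝ) := by
          show (if ((e n : ℝ)) ∈ A then ((e n : ℝ)) else a₀) = (q : ℝ)
          rw [hn, if_pos hqA]
        refine mem_iUnion.2 ⟨n, ha, ?_⟩
        rw [hcn]
        exact mem_Iic.2 hq1.le
      have hdir : Directed (· ⊆ ·) (fun n => A ∩ Iic (c n)) := by
        intro m n
        rcases le_total (c m) (c n) with h | h
        · exact ⟨n, inter_subset_inter_right _ (Iic_subset_Iic.2 h), subset_rfl⟩
        · exact ⟨m, subset_rfl, inter_subset_inter_right _ (Iic_subset_Iic.2 h)⟩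
      calc ν A ≤ ν (⋃ n, A ∩ Iic (c n)) := measure_mono hcover
        _ = ⨆ n, ν (A ∩ Iic (c n)) := hdir.measure_iUnion
        _ ≤ ENNReal.ofReal s := by
            refine iSup_le fun n => ?_
            exact le_trans (measure_mono inter_subset_right) (hbnd _ (hcA n))
  have hae := aux_ae μ hcount hprob ν hinv F hFmeas hFfin hharm hsubl
  set N := {t : ℝ | ¬ ∀ g : H, μ g ≠ 0 → F (g t) = F t} with hNdef
  have hN : ν N = 0 := ae_iff.1 hae
  have hsplit : ∀ t u : ℝ, t ≤ u → F u = F t + ν (Ioc t u) := by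
    intro t u htu
    rw [hF]
    simp only
    rw [← Iic_union_Ioc_eq_Iic htu, measure_union ?disj measurableSet_Ioc]
    case disj =>
      rw [Set.disjoint_left]
      rintro y hy1 ⟨hy2, _⟩
      exact absurd hy1 (not_le.2 hy2)
  have hzeroiff : ∀ t u : ℝ, t ≤ u → (F u = F t ↔ ν (Ioc t u) = 0) := by
    intro t u htu
    constructor
    · intro he
      have h1 := hsplit t u htu
      rw [he] at h1
      have h2 : F t + 0 = F t + ν (Ioc t u) := by rw [add_zero, ← h1]
      exact ((ENNReal.add_right_inj (hFfin t)).1 h2).symm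
    · intro h0
      rw [hsplit t u htu, h0, add_zero]
  have hIoc0 : ∀ g : H, μ g ≠ 0 → ∀ t : ℝ, g t < t → ν (Ioc (g t) t) = 0 := by
    intro g hg t hlt
    by_contra hpos
    set B := Ioc (g t) t ∩ Nᶜ with hB
    have hBpos : ν B ≠ 0 := by
      intro h0
      apply hpos
      have hcov : Ioc (g t) t ⊆ (Ioc (g t) t ∩ N) ∪ B := by
        intro u hu
        rcases Classical.em (u ∈ N) with huN | huN
        · exact mem_union_left _ ⟨hu, huN⟩
        · exact mem_union_right _ ⟨hu, huN⟩
      refine measure_mono_null hcov (measure_union_null ?_ h0)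
      exact measure_mono_null inter_subset_right hN
    have hBne : B.Nonempty := nonempty_of_measure_ne_zero hBpos
    have hgood : ∀ t' ∈ B, ν (Ioc (g t) t') = 0 := by
      rintro t' ⟨⟨h1, h2⟩, hn⟩
      have hP : ∀ g' : H, μ g' ≠ 0 → F (g' t') = F t' := not_not.1 hn
      have heq : F (g t') = F t' := hP g hg
      have hlt' : g t' < t' := lt_of_le_of_lt (g.monotone h2) h1
      have h0 : ν (Ioc (g t') t') = 0 := (hzeroiff (g t') t' hlt'.le).1 heq.symm
      exact measure_mono_null (Ioc_subset_Ioc_left (g.monotone h2)) h0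
    have hBbd : BddAbove B := ⟨t, fun b hb => hb.1.2⟩
    set r := sSup B with hr
    have hrt : r ≤ t := csSup_le hBne fun b hb => hb.1.2
    have hrgt : g t < r := by
      obtain ⟨b, hb⟩ := hBne
      exact lt_of_lt_of_le hb.1.1 (le_csSup hBbd hb)
    have hIoo : ν (Ioo (g t) r) = 0 := by
      have hcseq : ∀ n : ℕ, ∃ cc ∈ B, r - 1 / (n + 1) < cc := by
        intro n
        refine (lt_csSup_iff hBbd hBne).1 ?_
        have : (0:ℝ) < 1 / (n + 1) := by positivity
        linarith
      choose cc hccB hcclt using hcseq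
      have hcover : Ioo (g t) r ⊆ ⋃ n, Ioc (g t) (cc n) := by
        rintro u ⟨hu1, hu2⟩
        obtain ⟨n, hn⟩ := exists_nat_one_div_lt (by linarith : (0:ℝ) < r - u)
        refine mem_iUnion.2 ⟨n, hu1, ?_⟩
        have hnn : 1 / ((n:ℝ) + 1) < r - u := hn
        have := hcclt n
        linarith
      exact measure_mono_null hcover (measure_iUnion_null fun n => hgood _ (hccB n))
    have hsingle : ν {r} = 0 := by
      by_contra hr0
      have hrnotN : r ∉ N := by
        intro hrN
        exact hr0 (measure_mono_null (singleton_subset_iff.2 hrN) hN)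
      have hrB : r ∈ B := ⟨⟨hrgt, hrt⟩, hrnotN⟩
      exact hr0 (measure_mono_null
        (singleton_subset_iff.2 (show r ∈ Ioc (g t) r from ⟨hrgt, le_rfl⟩))
        (hgood r hrB))
    apply hpos
    have hcov2 : Ioc (g t) t ⊆ (Ioc (g t) t ∩ N) ∪ ({r} ∪ Ioo (g t) r) := by
      intro u hu
      rcases Classical.em (u ∈ N) with huN | huN
      · exact mem_union_left _ ⟨hu, huN⟩
      · have huB : u ∈ B := ⟨hu, huN⟩
        have hru : u ≤ r := le_csSup hBbd huB
        rcases eq_or_lt_of_le hru with he | hlt2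
        · exact mem_union_right _ (mem_union_left _ he)
        · exact mem_union_right _ (mem_union_right _ ⟨hu.1, hlt2⟩)
    refine measure_mono_null hcov2 ?_
    refine measure_union_null (measure_mono_null inter_subset_right hN) ?_
    exact measure_union_null hsingle hIoo
  have hIoc0' : ∀ g : H, μ g ≠ 0 → ∀ t : ℝ, t < g t → ν (Ioc t (g t)) = 0 := by
    intro g hg t hlt
    have hg' : μ g⁻¹ ≠ 0 := by
      intro h0
      exact hg (by rw [hsymm g, h0])
    have he : (g⁻¹ : H) (g t) = t := g.symm_apply_apply t
    have := hIoc0 g⁻¹ hg' (g t) (by rw [he]; exact hlt)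
    rwa [he] at this
  set K : Subgroup H :=
    { carrier := {k : H | ∀ t : ℝ, F (k t) = F t}
      one_mem' := fun _ => rfl
      mul_mem' := by
        intro a b ha hb t
        have : (a * b) t = a (b t) := rfl
        rw [this, ha, hb]
      inv_mem' := by
        intro a ha t
        have h1 := ha ((a⁻¹ : H) t)
        have e : a ((a⁻¹ : H) t) = t := a.apply_symm_apply t
        rw [e] at h1
        exact h1.symm } with hK
  have hSK : {g : H | μ g ≠ 0} ⊆ K := by
    intro g hg t
    rcases lt_trichotomy t (g t) with hlt | heq | hgt
    · exact (hzeroiff t (g t) hlt.le).2 (hIoc0' g hg t hlt)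
    · rw [← heq]
    · exact ((hzeroiff (g t) t hgt.le).2 (hIoc0 g hg t hgt)).symm
  have hclosure : ∀ k ∈ Subgroup.closure {g : H | μ g ≠ 0}, ∀ t : ℝ, F (k t) = F t :=
    fun k hk => (Subgroup.closure_le K).2 hSK hk
  have ht0ex : ∃ n : ℕ, F ((n : ℝ)) ≠ 0 := by
    by_contra hall
    push_neg at hall
    have hcov : (univ : Set ℝ) ⊆ ⋃ n : ℕ, Iic ((n : ℝ)) := by
      intro y _
      obtain ⟨n, hn⟩ := exists_nat_ge y
      exact mem_iUnion.2 ⟨n, hn⟩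
    have : ν univ = 0 := measure_mono_null hcov (measure_iUnion_null hall)
    exact (Measure.measure_univ_pos.2 hν).ne' this
  obtain ⟨n₀, ht₀⟩ := ht0ex
  set t₀ : ℝ := (n₀ : ℝ) with ht₀def
  have htend : Tendsto (fun n : ℕ => F (x - 1 - n)) atTop (nhds 0) := by
    have hanti : Antitone fun n : ℕ => Iic (x - 1 - (n : ℝ)) := by
      intro m n hmn
      refine Iic_subset_Iic.2 ?_
      have : (m : ℝ) ≤ n := Nat.cast_le.2 hmn
      linarith
    have h1 := tendsto_measure_iInter_atTop (μ := ν)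
      (fun n : ℕ => measurableSet_Iic.nullMeasurableSet) hanti
      ⟨0, by
        refine ne_top_of_le_ne_top hfin (measure_mono ?_)
        intro y hy
        simp only [Nat.cast_zero, sub_zero, mem_Iic] at hy
        exact mem_Iio.2 (by linarith)⟩
    have hempty : ⋂ n : ℕ, Iic (x - 1 - (n : ℝ)) = ∅ := by
      ext y
      simp only [mem_iInter, mem_Iic, mem_empty_iff_false, iff_false, not_forall, not_le]
      obtain ⟨n, hn⟩ := exists_nat_gt (x - 1 - y)
      exact ⟨n, by linarith⟩
    rw [hempty] at h1
    simp only [measure_empty] at h1; exact h1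
  have hTex : ∀ᶠ n : ℕ in atTop, F (x - 1 - n) < F t₀ :=
    htend.eventually_lt_const (pos_iff_ne_zero.2 ht₀)
  obtain ⟨nT, hT⟩ := hTex.exists
  set T : ℝ := x - 1 - nT with hTdef
  set C := {u : ℝ | u ≤ t₀ ∧ ν (Ioc u t₀) = 0} with hC
  have ht₀C : t₀ ∈ C := ⟨le_rfl, by simp⟩
  have hCT : ∀ u ∈ C, T < u := by
    rintro u ⟨hu1, hu2⟩
    have heq : F t₀ = F u := (hzeroiff u t₀ hu1).2 hu2
    by_contra hTu
    push_neg at hTu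
    exact absurd (lt_of_lt_of_le hT (heq ▸ hFmono hTu)) (lt_irrefl _)
  have hbddC : BddBelow C := ⟨T, fun u hu => (hCT u hu).le⟩
  set s := sInf C with hs
  have hst₀ : s ≤ t₀ := csInf_le hbddC ht₀C
  have hs0 : ν (Ioc s t₀) = 0 := by
    have hcseq : ∀ n : ℕ, ∃ u ∈ C, u < s + 1 / (n + 1) := by
      intro n
      exact (csInf_lt_iff hbddC ⟨t₀, ht₀C⟩).1 (lt_add_of_pos_right _ (by positivity))
    choose cc hccC hcclt using hcseq
    have hcover : Ioc s t₀ ⊆ ⋃ n, Ioc (cc n) t₀ := by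
      rintro u ⟨hu1, hu2⟩
      obtain ⟨n, hn⟩ := exists_nat_one_div_lt (by linarith : (0:ℝ) < u - s)
      refine mem_iUnion.2 ⟨n, ?_, hu2⟩
      have hnn : 1 / ((n:ℝ) + 1) < u - s := hn
      have := hcclt n
      linarith
    exact measure_mono_null hcover (measure_iUnion_null fun n => (hccC n).2)
  have hkeypos : ∀ w, w < s → ν (Ioc w s) ≠ 0 := by
    intro w hw h0
    have hcov : Ioc w t₀ ⊆ Ioc w s ∪ Ioc s t₀ := by
      rintro u ⟨hu1, hu2⟩
      rcases le_or_gt u s with h | h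
      · exact Or.inl ⟨hu1, h⟩
      · exact Or.inr ⟨h, hu2⟩
    have hw0 : ν (Ioc w t₀) = 0 :=
      measure_mono_null hcov (measure_union_null h0 hs0)
    have : w ∈ C := ⟨le_trans hw.le hst₀, hw0⟩
    exact absurd (csInf_le hbddC this) (not_le.2 hw)
  obtain ⟨k, hkcl, hks⟩ := hirr s
  rcases hks.lt_or_gt with hklt | hkgt
  · have heq : F (k s) = F s := hclosure _ hkcl s
    exact hkeypos _ hklt ((hzeroiff _ s hklt.le).1 heq.symm)
  · -- k s > s : use k⁻¹
    have hkinv : (k⁻¹ : H) s < s := by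
      have := k.symm.strictMono hkgt
      have e : (k.symm) (k s) = s := k.symm_apply_apply s
      rw [e] at this
      exact this
    have hmem : (k⁻¹ : H) ∈ Subgroup.closure {g : H | μ g ≠ 0} := inv_mem hkcl
    have heq : F ((k⁻¹ : H) s) = F s := hclosure _ hmem s
    exact hkeypos _ hkinv ((hzeroiff _ s hkinv.le).1 heq.symm)

/-- Let μ be a symmetric, irreducible probability measure with countable
support on Homeo⁺(ℝ).  Then every non-vanishing P-invariant Radon measure ν on ℝ is
bi-infinite: ν((x,∞)) = ∞ and ν((−∞,x)) = ∞ for every x ∈ ℝ. -/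
theorem bi_infinite
    (μ : H → ℝ≥0)
    (hcount : {g : H | μ g ≠ 0}.Countable)
    (hprob : ∑' g : H, (μ g : ℝ≥0∞) = 1)
    (hsymm : ∀ g : H, μ g = μ g⁻¹)
    (hirr : ∀ x : ℝ, ∃ g ∈ Subgroup.closure {g : H | μ g ≠ 0}, g x ≠ x)
    (ν : Measure ℝ) [IsLocallyFiniteMeasure ν] (hν : ν ≠ 0)
    (hinv : Measure.sum (fun g : H => (μ g : ℝ≥0∞) • ν.map g) = ν) :
    ∀ x : ℝ, ν (Set.Ioi x) = ∞ ∧ ν (Set.Iio x) = ∞ := fun x =>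
  ⟨right_side μ hcount hprob hsymm hirr ν hν hinv x,
   left_side μ hcount hprob hsymm hirr ν hν hinv x⟩
end
end

section
/- Let G be a finitely generated, irreducible group of orientation-preserving homeomorphisms of the real line. Then either G has a discrete orbit, or there is a unique nonempty closed G-invariant subset 𝓜 of ℝ that is minimal (contains no proper nonempty closed G-invariant subset), and in the latter case the closure of every G-orbit contains 𝓜. -/
open scoped NNReal ENNReal
open MeasureTheory Filter Topology Set Function

noncomputable section

/-- The orbit of a point `x` under a subgroup `G` of Homeo⁺(ℝ). -/
def orbit (G : Subgroup H) (x : ℝ) : Set ℝ := {y : ℝ | ∃ g ∈ G, g x = y}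

/-- A set `M ⊆ ℝ` is invariant under a subgroup `G` of Homeo⁺(ℝ). -/
def IsInvariantSet (G : Subgroup H) (M : Set ℝ) : Prop := ∀ g ∈ G, ∀ x ∈ M, g x ∈ M

/-- `M` is a nonempty closed `G`-invariant set containing no proper nonempty closed
`G`-invariant subset. -/
def IsMinimalSet (G : Subgroup H) (M : Set ℝ) : Prop :=
  M.Nonempty ∧ IsClosed M ∧ IsInvariantSet G M ∧
    ∀ M' ⊆ M, M'.Nonempty → IsClosed M' → IsInvariantSet G M' → M' = M

section aux

variable {G : Subgroup H}

lemma H.continuous (g : H) : Continuous (g : ℝ → ℝ) := OrderIso.continuous g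

lemma H.inv_apply_self (g : H) (x : ℝ) : (g⁻¹ : H) (g x) = x := g.symm_apply_apply x

lemma H.apply_inv_self (g : H) (x : ℝ) : g ((g⁻¹ : H) x) = x := g.apply_symm_apply x

lemma image_invariant {M : Set ℝ} (hM : IsInvariantSet G M) {g : H} (hg : g ∈ G) :
    g '' M = M := by
  apply subset_antisymm
  · rintro _ ⟨m, hm, rfl⟩; exact hM g hg m hm
  · intro m hm
    exact ⟨(g⁻¹ : H) m, hM g⁻¹ (inv_mem hg) m hm, H.apply_inv_self g m⟩

lemma closure_invariant {M : Set ℝ} (hM : IsInvariantSet G M) :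
    IsInvariantSet G (closure M) := by
  intro g hg x hx
  have h1 : g '' closure M ⊆ closure (g '' M) :=
    image_closure_subset_closure_image (H.continuous g)
  have := h1 ⟨x, hx, rfl⟩
  rwa [image_invariant hM hg] at this

lemma orbit_invariant (x : ℝ) : IsInvariantSet G (orbit G x) := by
  rintro g hg y ⟨k, hk, rfl⟩
  exact ⟨g * k, mul_mem hg hk, rfl⟩

lemma self_mem_orbit (x : ℝ) : x ∈ orbit G x := ⟨1, one_mem G, rfl⟩

end aux

section aux2

variable {G : Subgroup H}

/-- A nonempty closed invariant set is unbounded below. -/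
lemma exists_lt_of_invariant (hirr : ∀ x : ℝ, ∃ g ∈ G, g x ≠ x)
    {C : Set ℝ} (hCne : C.Nonempty) (hCcl : IsClosed C) (hCinv : IsInvariantSet G C)
    (y : ℝ) : ∃ c ∈ C, c < y := by
  by_contra hcon
  push_neg at hcon
  have hbdd : BddBelow C := ⟨y, fun c hc => hcon c hc⟩
  have hmem : sInf C ∈ C := hCcl.csInf_mem hCne hbdd
  have hfix : ∀ g ∈ G, g (sInf C) = sInf C := by
    intro g hg
    have h1 : sInf C ≤ g (sInf C) := csInf_le hbdd (hCinv g hg _ hmem)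
    have h2 : sInf C ≤ (g⁻¹ : H) (sInf C) := csInf_le hbdd (hCinv g⁻¹ (inv_mem hg) _ hmem)
    have h3 : g (sInf C) ≤ g ((g⁻¹ : H) (sInf C)) := g.monotone h2
    rw [H.apply_inv_self] at h3
    exact le_antisymm h3 h1
  obtain ⟨g, hg, hne⟩ := hirr (sInf C)
  exact hne (hfix g hg)

/-- A nonempty closed invariant set is unbounded above. -/
lemma exists_gt_of_invariant (hirr : ∀ x : ℝ, ∃ g ∈ G, g x ≠ x)
    {C : Set ℝ} (hCne : C.Nonempty) (hCcl : IsClosed C) (hCinv : IsInvariantSet G C)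
    (y : ℝ) : ∃ c ∈ C, y < c := by
  by_contra hcon
  push_neg at hcon
  have hbdd : BddAbove C := ⟨y, fun c hc => hcon c hc⟩
  have hmem : sSup C ∈ C := hCcl.csSup_mem hCne hbdd
  have hfix : ∀ g ∈ G, g (sSup C) = sSup C := by
    intro g hg
    have h1 : g (sSup C) ≤ sSup C := le_csSup hbdd (hCinv g hg _ hmem)
    have h2 : (g⁻¹ : H) (sSup C) ≤ sSup C := le_csSup hbdd (hCinv g⁻¹ (inv_mem hg) _ hmem)
    have h3 : g ((g⁻¹ : H) (sSup C)) ≤ g (sSup C) := g.monotone h2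
    rw [H.apply_inv_self] at h3
    exact le_antisymm h1 h3
  obtain ⟨g, hg, hne⟩ := hirr (sSup C)
  exact hne (hfix g hg)

end aux2

section hfun

variable {G : Subgroup H} {T : Finset H} (hT : T.Nonempty)

/-- The max of the generators. -/
def hfun (hT : T.Nonempty) (x : ℝ) : ℝ := T.sup' hT (fun t => t x)

lemma hfun_mono {a b : ℝ} (hab : a ≤ b) : hfun hT a ≤ hfun hT b := by
  apply Finset.sup'_le
  intro t ht
  exact le_trans (t.monotone hab) (Finset.le_sup' (fun t : H => t b) ht)

lemma lt_hfun (hmove : ∀ x : ℝ, ∃ t ∈ T, x < t x) (x : ℝ) : x < hfun hT x := by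
  obtain ⟨t, ht, hlt⟩ := hmove x
  exact lt_of_lt_of_le hlt (Finset.le_sup' (fun t : H => t x) ht)

lemma hfun_mem {C : Set ℝ} (hTG : ∀ t ∈ T, t ∈ G) (hCinv : IsInvariantSet G C)
    {c : ℝ} (hc : c ∈ C) : hfun hT c ∈ C := by
  obtain ⟨t, ht, heq⟩ := Finset.exists_mem_eq_sup' hT (fun t : H => t c)
  rw [hfun, heq]
  exact hCinv t (hTG t ht) c hc

/-- every nonempty closed invariant set meets `[y, hfun y]`. -/
lemma meets_interval (hTG : ∀ t ∈ T, t ∈ G) (hmove : ∀ x : ℝ, ∃ t ∈ T, x < t x)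
    (hirr : ∀ x : ℝ, ∃ g ∈ G, g x ≠ x)
    {C : Set ℝ} (hCne : C.Nonempty) (hCcl : IsClosed C) (hCinv : IsInvariantSet G C)
    (y : ℝ) : ∃ z ∈ C, y ≤ z ∧ z ≤ hfun hT y := by
  obtain ⟨c₀, hc₀C, hc₀y⟩ := exists_lt_of_invariant hirr hCne hCcl hCinv y
  set c : ℕ → ℝ := fun n => (hfun hT)^[n] c₀ with hc
  have hcsucc : ∀ n, c (n + 1) = hfun hT (c n) := by
    intro n; simp [hc, Function.iterate_succ_apply']
  have hcC : ∀ n, c n ∈ C := by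
    intro n
    induction n with
    | zero => exact hc₀C
    | succ n ih => rw [hcsucc]; exact hfun_mem hT hTG hCinv ih
  have hmono : ∀ n, c n < c (n + 1) := by
    intro n; rw [hcsucc]; exact lt_hfun hT hmove (c n)
  classical
  -- there exists n with y ≤ c n
  have hexists : ∃ n, y ≤ c n := by
    by_contra hcon
    push_neg at hcon
    set A : Set ℝ := Set.range c with hA
    have hAne : A.Nonempty := ⟨c 0, 0, rfl⟩
    have hAbdd : BddAbove A := by
      refine ⟨y, ?_⟩
      rintro _ ⟨n, rfl⟩
      exact le_of_lt (hcon n)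
    set L : ℝ := sSup A with hL
    have hle : ∀ t ∈ T, t L ≤ L := by
      intro t ht
      have h1 : t L = sSup (t '' A) := t.map_csSup' hAne hAbdd
      rw [h1]
      apply csSup_le (hAne.image t)
      rintro _ ⟨_, ⟨n, rfl⟩, rfl⟩
      have h2 : t (c n) ≤ c (n + 1) := by
        rw [hcsucc]
        exact Finset.le_sup' (fun t : H => t (c n)) ht
      exact le_trans h2 (le_csSup hAbdd ⟨n + 1, rfl⟩)
    have : hfun hT L ≤ L := Finset.sup'_le hT _ hle
    exact absurd this (not_le.mpr (lt_hfun hT hmove L))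
  have hny : y ≤ c (Nat.find hexists) := Nat.find_spec hexists
  have hnz : Nat.find hexists ≠ 0 := by
    intro h0
    rw [h0] at hny
    exact absurd hny (not_le.mpr hc₀y)
  obtain ⟨m, hm⟩ := Nat.exists_eq_succ_of_ne_zero hnz
  rw [hm] at hny
  have hmlt : c m < y := by
    by_contra hcon2
    push_neg at hcon2
    exact Nat.find_min hexists (show m < Nat.find hexists by omega) hcon2
  refine ⟨c (m + 1), hcC _, hny, ?_⟩
  rw [hcsucc]
  exact hfun_mono hT (le_of_lt hmlt)

end hfun

section lemmaL

variable {G : Subgroup H}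

lemma image_inter_Iic {M : Set ℝ} (hMinv : IsInvariantSet G M) {g : H} (hg : g ∈ G) (x : ℝ) :
    g '' (M ∩ Iic x) = M ∩ Iic (g x) := by
  ext y
  constructor
  · rintro ⟨m, ⟨hmM, hmx⟩, rfl⟩
    exact ⟨hMinv g hg m hmM, g.monotone hmx⟩
  · rintro ⟨hyM, hyx⟩
    refine ⟨(g⁻¹ : H) y, ⟨hMinv g⁻¹ (inv_mem hg) y hyM, ?_⟩, H.apply_inv_self g y⟩
    have := (g⁻¹ : H).monotone hyx
    rwa [H.inv_apply_self] at this

/-- A minimal set with no isolated points is contained in every nonempty closed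
invariant set. -/
lemma perfect_minimal_subset
    (hirr : ∀ x : ℝ, ∃ g ∈ G, g x ≠ x)
    {M : Set ℝ} (hMne : M.Nonempty) (hMcl : IsClosed M) (hMinv : IsInvariantSet G M)
    (hMmin : ∀ M' ⊆ M, M'.Nonempty → IsClosed M' → IsInvariantSet G M' → M' = M)
    (hperf : ∀ m ∈ M, ∀ U : Set ℝ, IsOpen U → m ∈ U → ∃ m', m' ∈ M ∩ U ∧ m' ≠ m)
    {C : Set ℝ} (hCne : C.Nonempty) (hCcl : IsClosed C) (hCinv : IsInvariantSet G C) :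
    M ⊆ C := by
  -- it suffices that M ∩ C is nonempty
  suffices hsuff : (M ∩ C).Nonempty by
    have heq : M ∩ C = M := hMmin (M ∩ C) inter_subset_left hsuff
      (hMcl.inter hCcl) (fun g hg x hx => ⟨hMinv g hg x hx.1, hCinv g hg x hx.2⟩)
    intro m hm
    rw [← heq] at hm
    exact hm.2
  by_contra hdisj
  rw [not_nonempty_iff_eq_empty] at hdisj
  have hMC : ∀ x ∈ C, x ∉ M := by
    intro x hxC hxM
    exact absurd (show x ∈ M ∩ C from ⟨hxM, hxC⟩) (by rw [hdisj]; exact notMem_empty x)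
  -- the projection to the closest M-point on the left
  set π : ℝ → ℝ := fun x => sSup (M ∩ Iic x) with hπ
  have hAne : ∀ x : ℝ, (M ∩ Iic x).Nonempty := by
    intro x
    obtain ⟨m, hmM, hmx⟩ := exists_lt_of_invariant hirr hMne hMcl hMinv x
    exact ⟨m, hmM, le_of_lt hmx⟩
  have hAbdd : ∀ x : ℝ, BddAbove (M ∩ Iic x) := fun x => ⟨x, fun m hm => hm.2⟩
  have hπmem : ∀ x : ℝ, π x ∈ M ∩ Iic x := fun x =>
    (hMcl.inter isClosed_Iic).csSup_mem (hAne x) (hAbdd x)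
  have hπlt : ∀ x ∈ C, π x < x := by
    intro x hx
    have hle : π x ≤ x := (hπmem x).2
    rcases lt_or_eq_of_le hle with h | h
    · exact h
    · exact absurd ((h ▸ (hπmem x).1) : x ∈ M) (hMC x hx)
  have hπgap : ∀ x : ℝ, ∀ m' ∈ M, m' ≤ x → m' ≤ π x := by
    intro x m' hm' hmx
    exact le_csSup (hAbdd x) ⟨hm', hmx⟩
  have hπequiv : ∀ g ∈ G, ∀ x : ℝ, g (π x) = π (g x) := by
    intro g hg x
    have h1 : g (π x) = sSup (g '' (M ∩ Iic x)) := g.map_csSup' (hAne x) (hAbdd x)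
    rw [h1, image_inter_Iic hMinv hg x]
  -- E = π '' C is invariant and dense in M
  set E : Set ℝ := π '' C with hE
  have hEM : E ⊆ M := by rintro _ ⟨x, _, rfl⟩; exact (hπmem x).1
  have hEinv : IsInvariantSet G E := by
    rintro g hg _ ⟨x, hx, rfl⟩
    rw [hπequiv g hg x]
    exact ⟨g x, hCinv g hg x hx, rfl⟩
  have hEdense : closure E = M := by
    apply hMmin
    · exact closure_minimal hEM hMcl
    · exact (hCne.image π).closure
    · exact isClosed_closure
    · exact closure_invariant hEinv
  -- main argument: every point of M is in the closure of C
  have hmain : ∀ m ∈ M, m ∈ closure C := by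
    intro m hm
    rw [Metric.mem_closure_iff]
    intro ε hε
    set U : Set ℝ := Ioo (m - ε) (m + ε) with hU
    have hUopen : IsOpen U := isOpen_Ioo
    have hmU : m ∈ U := by constructor <;> simp [hU] <;> linarith
    obtain ⟨m', ⟨hm'M, hm'U⟩, hm'ne⟩ := hperf m hm U hUopen hmU
    set r : ℝ := dist m' m / 2 with hr
    have hrpos : 0 < r := by
      have : 0 < dist m' m := dist_pos.mpr hm'ne
      positivity
    -- two disjoint open sets around m and m', both inside U
    set V : Set ℝ := Metric.ball m r ∩ U with hV
    set V' : Set ℝ := Metric.ball m' r ∩ U with hV'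
    have hme : m ∈ closure E := hEdense ▸ hm
    have hm'e : m' ∈ closure E := hEdense ▸ hm'M
    obtain ⟨e, heV, heE⟩ := (_root_.mem_closure_iff.mp hme) V
      ((Metric.isOpen_ball).inter hUopen) ⟨Metric.mem_ball_self hrpos, hmU⟩
    obtain ⟨e', he'V, he'E⟩ := (_root_.mem_closure_iff.mp hm'e) V'
      ((Metric.isOpen_ball).inter hUopen) ⟨Metric.mem_ball_self hrpos, hm'U⟩
    have hnee : e ≠ e' := by
      rintro rfl
      have h1 : dist e m < r := heV.1
      have h2 : dist e m' < r := he'V.1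
      have := dist_triangle m' e m
      rw [dist_comm e m'] at h2
      rw [hr] at h1 h2
      have hd : dist m' m ≤ dist m' e + dist e m := this
      linarith
    -- order the two points
    have key : ∀ a b : ℝ, a ∈ E → b ∈ E → a < b → a ∈ U → b ∈ U →
        ∃ c ∈ C, dist m c < ε := by
      intro a b haE hbE hab haU hbU
      obtain ⟨x, hxC, hxπ⟩ := haE
      have hxa : a < x := hxπ ▸ hπlt x hxC
      have hbx : x < b := by
        by_contra hcon
        push_neg at hcon
        have := hπgap x b (hEM hbE) hcon
        rw [hxπ] at this
        exact absurd hab (not_lt.mpr this)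
      refine ⟨x, hxC, ?_⟩
      rw [Real.dist_eq, abs_lt]
      rcases haU with ⟨ha1, ha2⟩
      rcases hbU with ⟨hb1, hb2⟩
      constructor <;> linarith
    have heU : e ∈ U := heV.2
    have he'U : e' ∈ U := he'V.2
    rcases lt_or_gt_of_ne hnee with hlt | hgt
    · obtain ⟨c, hc, hd⟩ := key e e' heE he'E hlt heU he'U
      exact ⟨c, hc, hd⟩
    · obtain ⟨c, hc, hd⟩ := key e' e he'E heE hgt he'U heU
      exact ⟨c, hc, hd⟩
  obtain ⟨m, hm⟩ := hMne
  have : m ∈ C := hCcl.closure_eq ▸ hmain m hm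
  exact hMC m this hm

end lemmaL

section discrete

variable {G : Subgroup H}

/-- If a point is isolated in an invariant set containing it, its orbit is discrete. -/
lemma discrete_orbit_of_isolated {M : Set ℝ} (hMinv : IsInvariantSet G M)
    {m : ℝ} (hm : m ∈ M) {U : Set ℝ} (hU : IsOpen U) (hUM : U ∩ M = {m}) :
    DiscreteTopology ↥(orbit G m) := by
  apply discreteTopology_iff_isOpen_singleton.mpr
  rintro ⟨y, g, hg, rfl⟩
  set Ug : Set ℝ := g '' U with hUg
  have hUgopen : IsOpen Ug := (g.toHomeomorph.isOpen_image).mpr hU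
  have hUgM : Ug ∩ M = {g m} := by
    have h1 : Ug ∩ M = g '' (U ∩ M) := by
      rw [image_inter g.injective, image_invariant hMinv hg]
    rw [h1, hUM, image_singleton]
  have hsub : Subtype.val ⁻¹' Ug = ({⟨g m, g, hg, rfl⟩} : Set ↥(orbit G m)) := by
    ext ⟨z, hz⟩
    simp only [mem_preimage, mem_singleton_iff, Subtype.ext_iff]
    constructor
    · intro hzU
      have hzM : z ∈ M := by
        obtain ⟨k, hk, rfl⟩ := hz
        exact hMinv k hk m hm
      have : z ∈ Ug ∩ M := ⟨hzU, hzM⟩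
      rw [hUgM] at this
      exact this
    · rintro rfl
      exact ⟨m, (show m ∈ U ∩ M from hUM ▸ rfl).1, rfl⟩
  rw [← hsub]
  exact hUgopen.preimage continuous_subtype_val

end discrete

section mainsec

variable {G : Subgroup H}

/-- The subgroup of elements fixing a point. -/
def stab (x : ℝ) : Subgroup H where
  carrier := {g : H | g x = x}
  mul_mem' := by
    intro a b ha hb
    simp only [mem_setOf_eq] at *
    show a (b x) = x
    rw [hb, ha]
  one_mem' := rfl
  inv_mem' := by
    intro a ha
    simp only [mem_setOf_eq] at *
    nth_rewrite 1 [← ha]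
    exact H.inv_apply_self a x

end mainsec

section mainsec2

variable {G : Subgroup H}

lemma exists_good_finset (hfg : G.FG) (hirr : ∀ x : ℝ, ∃ g ∈ G, g x ≠ x) :
    ∃ T : Finset H, T.Nonempty ∧ (∀ t ∈ T, t ∈ G) ∧ (∀ x : ℝ, ∃ t ∈ T, x < t x) := by
  classical
  obtain ⟨S, hS⟩ := hfg
  have hSsub : ∀ s ∈ S, s ∈ G := by
    intro s hs
    rw [← hS]
    exact Subgroup.subset_closure hs
  haveI : DecidableEq H := Classical.decEq H
  refine ⟨S ∪ S.image (·⁻¹), ?_, ?_, ?_⟩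
  · -- S is nonempty
    rcases S.eq_empty_or_nonempty with hSe | hSne
    · exfalso
      obtain ⟨g, hg, hgne⟩ := hirr 0
      rw [← hS, hSe] at hg
      simp only [Finset.coe_empty, Subgroup.closure_empty, Subgroup.mem_bot] at hg
      rw [hg] at hgne
      exact hgne rfl
    · exact hSne.mono Finset.subset_union_left
  · intro t ht
    rcases Finset.mem_union.mp ht with h | h
    · exact hSsub t h
    · obtain ⟨s, hs, rfl⟩ := Finset.mem_image.mp h
      exact inv_mem (hSsub s hs)
  · intro x
    by_contra hcon
    push_neg at hcon
    have hfix : ∀ s ∈ S, s x = x := by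
      intro s hs
      have h1 : s x ≤ x := hcon s (Finset.mem_union_left _ hs)
      have h2 : (s⁻¹ : H) x ≤ x := hcon s⁻¹
        (Finset.mem_union_right _ (Finset.mem_image_of_mem _ hs))
      have h3 : s ((s⁻¹ : H) x) ≤ s x := s.monotone h2
      rw [H.apply_inv_self] at h3
      exact le_antisymm h1 h3
    have hGle : G ≤ stab x := by
      rw [← hS]
      exact (Subgroup.closure_le (stab x)).mpr (fun s hs => hfix s hs)
    obtain ⟨g, hg, hgne⟩ := hirr x
    exact hgne (hGle hg)

lemma exists_minimal_set (hfg : G.FG) (hirr : ∀ x : ℝ, ∃ g ∈ G, g x ≠ x) :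
    ∃ M : Set ℝ, IsMinimalSet G M := by
  obtain ⟨T, hT, hTG, hmove⟩ := exists_good_finset hfg hirr
  set S' : Set (Set ℝ) := {C : Set ℝ | C.Nonempty ∧ IsClosed C ∧ IsInvariantSet G C} with hS'
  have hzorn := zorn_superset_nonempty S' ?_ univ ⟨univ_nonempty, isClosed_univ,
    fun _ _ _ _ => trivial⟩
  · obtain ⟨M, -, hMmem, hMmin⟩ := hzorn
    refine ⟨M, hMmem.1, hMmem.2.1, hMmem.2.2, ?_⟩
    intro M' hsub hne hcl hinv
    exact le_antisymm hsub (hMmin ⟨hne, hcl, hinv⟩ hsub)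
  · -- chains have lower bounds
    intro c hcS hchain hcne
    refine ⟨⋂₀ c, ⟨?_, ?_, ?_⟩, fun s hs => sInter_subset_of_mem hs⟩
    · -- nonempty via compactness
      set K : Set ℝ := Icc 0 (hfun hT 0) with hK
      haveI : Nonempty ↥c := Set.Nonempty.coe_sort hcne
      have hnon : (⋂ C : ↥c, ((C : Set ℝ) ∩ K)).Nonempty := by
        apply IsCompact.nonempty_iInter_of_directed_nonempty_isCompact_isClosed
        · -- directed
          rintro ⟨A, hA⟩ ⟨B, hB⟩
          rcases eq_or_ne A B with rfl | hne
          · exact ⟨⟨A, hA⟩, subset_rfl, subset_rfl⟩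
          · rcases hchain hA hB hne with h | h
            · exact ⟨⟨A, hA⟩, subset_rfl, inter_subset_inter_left K h⟩
            · exact ⟨⟨B, hB⟩, inter_subset_inter_left K h, subset_rfl⟩
        · rintro ⟨A, hA⟩
          obtain ⟨hAne, hAcl, hAinv⟩ := hcS hA
          obtain ⟨z, hz, hz0, hzh⟩ := meets_interval hT hTG hmove hirr hAne hAcl hAinv 0
          exact ⟨z, hz, hz0, hzh⟩
        · rintro ⟨A, hA⟩
          exact isCompact_Icc.inter_left (hcS hA).2.1
        · rintro ⟨A, hA⟩
          exact ((hcS hA).2.1).inter isClosed_Icc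
      obtain ⟨z, hz⟩ := hnon
      refine ⟨z, ?_⟩
      rw [mem_sInter]
      intro A hA
      exact (mem_iInter.mp hz ⟨A, hA⟩).1
    · exact isClosed_sInter (fun A hA => (hcS hA).2.1)
    · intro g hg x hx
      rw [mem_sInter] at *
      intro A hA
      exact (hcS hA).2.2 g hg x (hx A hA) 

end mainsec2

/-- A finitely generated irreducible group of orientation-preserving
homeomorphisms of ℝ either has a discrete orbit, or possesses a unique minimal nonempty
closed invariant set 𝓜, in which case the closure of every orbit contains 𝓜. -/
theorem discrete_orbit_or_unique_minimal_set
    (G : Subgroup H) (hfg : G.FG)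
    (hirr : ∀ x : ℝ, ∃ g ∈ G, g x ≠ x) :
    (∃ x : ℝ, DiscreteTopology ↥(orbit G x)) ∨
    (∃ M : Set ℝ, IsMinimalSet G M ∧ (∀ M' : Set ℝ, IsMinimalSet G M' → M' = M) ∧
      ∀ x : ℝ, M ⊆ closure (orbit G x)) := by
  obtain ⟨M, hMne, hMcl, hMinv, hMmin⟩ := exists_minimal_set hfg hirr
  by_cases hiso : ∃ m ∈ M, ∃ U : Set ℝ, IsOpen U ∧ U ∩ M = {m}
  · obtain ⟨m, hm, U, hU, hUM⟩ := hiso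
    exact Or.inl ⟨m, discrete_orbit_of_isolated hMinv hm hU hUM⟩
  · right
    push_neg at hiso
    have hperf : ∀ m ∈ M, ∀ U : Set ℝ, IsOpen U → m ∈ U → ∃ m', m' ∈ M ∩ U ∧ m' ≠ m := by
      intro m hm U hUopen hmU
      by_contra hcon
      push_neg at hcon
      apply hiso m hm U hUopen
      ext z
      simp only [mem_inter_iff, mem_singleton_iff]
      constructor
      · rintro ⟨hzU, hzM⟩
        exact hcon z ⟨hzM, hzU⟩
      · rintro rfl
        exact ⟨hmU, hm⟩
    have key : ∀ C : Set ℝ, C.Nonempty → IsClosed C → IsInvariantSet G C → M ⊆ C :=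
      fun C a b c => perfect_minimal_subset hirr hMne hMcl hMinv hMmin hperf a b c
    refine ⟨M, ⟨hMne, hMcl, hMinv, hMmin⟩, ?_, ?_⟩
    · intro M' hM'
      obtain ⟨hne', hcl', hinv', hmin'⟩ := hM'
      exact (hmin' M (key M' hne' hcl' hinv') hMne hMcl hMinv).symm
    · intro x
      exact key _ ⟨x, subset_closure (self_mem_orbit x)⟩ isClosed_closure
        (closure_invariant (orbit_invariant x))
end
end

section
/- For any orientation-preserving homeomorphism g of the real line and any real numbers a < b, we have ∫_a^b [(g(x) − x) + (g⁻¹(x) − x)] dx = Φ_g(b) − Φ_g(a), where Φ_g(c) denotes the two-dimensional Lebesgue measure of the set {(x,y) ∈ ℝ² : x < c < y < g(x) or x < c < y < g⁻¹(x)}. -/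
open scoped NNReal ENNReal
open MeasureTheory Filter Topology Set Function

noncomputable section

/-- `Φ g c` is the two-dimensional Lebesgue measure of
`{(x,y) : x < c < y < g(x) or x < c < y < g⁻¹(x)}`. -/
def Phi (g : H) (c : ℝ) : ℝ≥0∞ :=
  volume {p : ℝ × ℝ | p.1 < c ∧ c < p.2 ∧ (p.2 < g p.1 ∨ p.2 < g.symm p.1)}

lemma slice_meas (s : Set ℝ) (hs : MeasurableSet s) (α β : ℝ → ℝ)
    (hα : Measurable α) (hβ : Measurable β) :
    MeasurableSet {p : ℝ × ℝ | p.1 ∈ s ∧ α p.1 < p.2 ∧ p.2 < β p.1} := by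
  have : {p : ℝ × ℝ | p.1 ∈ s ∧ α p.1 < p.2 ∧ p.2 < β p.1}
      = (Prod.fst ⁻¹' s) ∩ ({p : ℝ × ℝ | α p.1 < p.2} ∩ {p : ℝ × ℝ | p.2 < β p.1}) := by
    ext p; simp [Set.mem_setOf_eq, Set.mem_inter_iff, and_assoc]
  rw [this]
  exact (hs.preimage measurable_fst).inter
    ((measurableSet_lt (hα.comp measurable_fst) measurable_snd).inter
      (measurableSet_lt measurable_snd (hβ.comp measurable_fst)))

lemma slice_vol (s : Set ℝ) (hs : MeasurableSet s) (α β : ℝ → ℝ)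
    (hα : Measurable α) (hβ : Measurable β) :
    volume {p : ℝ × ℝ | p.1 ∈ s ∧ α p.1 < p.2 ∧ p.2 < β p.1}
      = ∫⁻ x in s, ENNReal.ofReal (β x - α x) := by
  have hS := slice_meas s hs α β hα hβ
  rw [Measure.volume_eq_prod, Measure.prod_apply hS]
  have hsec : ∀ x : ℝ,
      (volume : Measure ℝ) (Prod.mk x ⁻¹' {p : ℝ × ℝ | p.1 ∈ s ∧ α p.1 < p.2 ∧ p.2 < β p.1})
        = s.indicator (fun x => ENNReal.ofReal (β x - α x)) x := by
    intro x
    by_cases hx : x ∈ s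
    · have : Prod.mk x ⁻¹' {p : ℝ × ℝ | p.1 ∈ s ∧ α p.1 < p.2 ∧ p.2 < β p.1}
          = Set.Ioo (α x) (β x) := by
        ext y; simp [hx, Set.mem_Ioo, and_comm]
      rw [this, Real.volume_Ioo, Set.indicator_of_mem hx]
    · have : Prod.mk x ⁻¹' {p : ℝ × ℝ | p.1 ∈ s ∧ α p.1 < p.2 ∧ p.2 < β p.1}
          = (∅ : Set ℝ) := by
        ext y; simp [hx]
      rw [this, measure_empty, Set.indicator_of_notMem hx]
  rw [lintegral_congr hsec, lintegral_indicator hs]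

lemma vol_swap {S : Set (ℝ × ℝ)} (hS : MeasurableSet S) :
    volume (Prod.swap ⁻¹' S) = volume S := by
  rw [Measure.volume_eq_prod, ← Measure.map_apply measurable_swap hS, Measure.prod_swap]

lemma J_lt_top {s : Set ℝ} (f : ℝ → ℝ) (M : ℝ) (hM : ∀ x ∈ s, f x ≤ M)
    (hvol : volume s ≠ ⊤) :
    ∫⁻ x in s, ENNReal.ofReal (f x) < ⊤ := by
  calc ∫⁻ x in s, ENNReal.ofReal (f x)
      ≤ ∫⁻ _ in s, ENNReal.ofReal M :=
        setLIntegral_mono measurable_const (fun x hx => ENNReal.ofReal_le_ofReal (hM x hx))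
    _ = ENNReal.ofReal M * volume s := setLIntegral_const _ _
    _ < ⊤ := ENNReal.mul_lt_top ENNReal.ofReal_lt_top (lt_top_iff_ne_top.mpr hvol)

/-- For any orientation-preserving homeomorphism g of ℝ and any
a < b, one has ∫_a^b [(g(x) − x) + (g⁻¹(x) − x)] dx = Φ_g(b) − Φ_g(a). -/
theorem integral_displacement_eq_Phi_sub
    (g : H) (a b : ℝ) (hab : a < b) :
    ∫ x in a..b, ((g x - x) + (g.symm x - x)) =
      (Phi g b).toReal - (Phi g a).toReal := by
  set m : ℝ → ℝ := fun x => max (g x) (g.symm x) with hm_def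
  set n : ℝ → ℝ := fun x => min (g x) (g.symm x) with hn_def
  have hgmono : Monotone (g : ℝ → ℝ) := g.monotone
  have hsmono : Monotone (g.symm : ℝ → ℝ) := g.symm.monotone
  have hm_mono : Monotone m := hgmono.max hsmono
  have hn_mono : Monotone n := hgmono.min hsmono
  have hm_meas : Measurable m := hm_mono.measurable
  have hn_meas : Measurable n := hn_mono.measurable
  have hm_cont : Continuous m := (g.continuous).max (g.symm.continuous)
  have hn_cont : Continuous n := (g.continuous).min (g.symm.continuous)
  -- key equivalence
  have hlt1 : ∀ x y : ℝ, g y < x ↔ y < g.symm x := by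
    intro x y
    conv_lhs => rw [← g.apply_symm_apply x]
    exact g.lt_iff_lt
  have hlt2 : ∀ x y : ℝ, g.symm y < x ↔ y < g x := by
    intro x y
    conv_lhs => rw [← g.symm_apply_apply x]
    exact g.symm.lt_iff_lt
  have key : ∀ x y : ℝ, n y < x ↔ y < m x := by
    intro x y
    simp only [hm_def, hn_def, min_lt_iff, lt_max_iff]
    rw [hlt1, hlt2]
    tauto
  have hxm : ∀ x, x ≤ m x := by
    intro x
    rcases le_total x (g x) with h | h
    · exact le_max_of_le_left h
    · have := hsmono h
      rw [g.symm_apply_apply] at this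
      exact le_max_of_le_right this
  have hnx : ∀ x, n x ≤ x := by
    intro x
    rcases le_total (g x) x with h | h
    · exact min_le_of_left_le h
    · have := hsmono h
      rw [g.symm_apply_apply] at this
      exact min_le_of_right_le this
  -- Phi as a lintegral
  have hPhi : ∀ c : ℝ, Phi g c = ∫⁻ x in Iio c, ENNReal.ofReal (m x - c) := by
    intro c
    have hset : {p : ℝ × ℝ | p.1 < c ∧ c < p.2 ∧ (p.2 < g p.1 ∨ p.2 < g.symm p.1)}
        = {p : ℝ × ℝ | p.1 ∈ Iio c ∧ (fun _ => c) p.1 < p.2 ∧ p.2 < m p.1} := by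
      ext p
      simp only [Set.mem_setOf_eq, Set.mem_Iio, hm_def, lt_max_iff]
    rw [Phi, hset, slice_vol _ measurableSet_Iio _ _ measurable_const hm_meas]
  -- named lintegrals
  set q : ℝ≥0∞ := ∫⁻ x in Ioo a b, ENNReal.ofReal (m x - b) with hq_def
  set p : ℝ≥0∞ := ∫⁻ x in Ioo a b, ENNReal.ofReal (a - n x) with hp_def
  set e : ℝ≥0∞ := ∫⁻ x in Ioo a b, ENNReal.ofReal (min (m x) b - x) with he_def
  set r : ℝ≥0∞ := ∫⁻ x in Iio a, ENNReal.ofReal (m x - b) with hr_def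
  -- swap identity 1 : pa = p
  have hswap1 : (∫⁻ x in Iio a, ENNReal.ofReal (min (m x) b - a)) = p := by
    rw [hp_def,
      ← slice_vol (Iio a) measurableSet_Iio (fun _ => a) (fun x => min (m x) b)
        measurable_const (hm_meas.min measurable_const),
      ← slice_vol (Ioo a b) measurableSet_Ioo n (fun _ => a) hn_meas measurable_const]
    have hset : {p_1 : ℝ × ℝ | p_1.1 ∈ Iio a ∧ (fun _ => a) p_1.1 < p_1.2 ∧ p_1.2 < min (m p_1.1) b}
        = Prod.swap ⁻¹' {p_1 : ℝ × ℝ | p_1.1 ∈ Ioo a b ∧ n p_1.1 < p_1.2 ∧ p_1.2 < (fun _ => a) p_1.1} := by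
      ext z
      simp only [Set.mem_preimage, Prod.fst_swap, Prod.snd_swap, Set.mem_setOf_eq,
        Set.mem_Iio, Set.mem_Ioo, lt_min_iff]
      constructor
      · rintro ⟨h1, h2, h3, h4⟩
        exact ⟨⟨h2, h4⟩, (key z.1 z.2).mpr h3, h1⟩
      · rintro ⟨⟨h1, h2⟩, h3, h4⟩
        exact ⟨h4, h1, (key z.1 z.2).mp h3, h2⟩
    rw [hset]
    exact vol_swap (slice_meas (Ioo a b) measurableSet_Ioo n (fun _ => a) hn_meas measurable_const)
  -- swap identity 2 : e = e'
  have hswap2 : e = ∫⁻ x in Ioo a b, ENNReal.ofReal (x - max (n x) a) := by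
    rw [he_def,
      ← slice_vol (Ioo a b) measurableSet_Ioo (fun x => x) (fun x => min (m x) b)
        measurable_id (hm_meas.min measurable_const),
      ← slice_vol (Ioo a b) measurableSet_Ioo (fun x => max (n x) a) (fun x => x)
        (hn_meas.max measurable_const) measurable_id]
    have hset : {p_1 : ℝ × ℝ | p_1.1 ∈ Ioo a b ∧ p_1.1 < p_1.2 ∧ p_1.2 < min (m p_1.1) b}
        = Prod.swap ⁻¹' {p_1 : ℝ × ℝ | p_1.1 ∈ Ioo a b ∧ max (n p_1.1) a < p_1.2 ∧ p_1.2 < p_1.1} := by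
      ext z
      simp only [Set.mem_preimage, Prod.fst_swap, Prod.snd_swap, Set.mem_setOf_eq,
        Set.mem_Ioo, lt_min_iff, max_lt_iff]
      constructor
      · rintro ⟨⟨h1, h2⟩, h3, h4, h5⟩
        exact ⟨⟨lt_trans h1 h3, h5⟩, ⟨(key z.1 z.2).mpr h4, h1⟩, h3⟩
      · rintro ⟨⟨h1, h2⟩, ⟨h3, h4⟩, h5⟩
        exact ⟨⟨h4, lt_trans h5 h2⟩, h5, (key z.1 z.2).mp h3, h2⟩
    rw [hset]
    exact vol_swap (slice_meas (Ioo a b) measurableSet_Ioo _ _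
      (hn_meas.max measurable_const) measurable_id)
  -- Phi a = r + p
  have hPhia : Phi g a = r + p := by
    rw [hPhi a, hr_def, ← hswap1]
    have hpt : ∀ x ∈ Iio a,
        ENNReal.ofReal (m x - a)
          = ENNReal.ofReal (m x - b) + ENNReal.ofReal (min (m x) b - a) := by
      intro x _
      rcases le_total (m x) b with h | h
      · rw [min_eq_left h,
          show ENNReal.ofReal (m x - b) = 0 from ENNReal.ofReal_eq_zero.mpr (by linarith),
          zero_add]
      · rw [min_eq_right h, ← ENNReal.ofReal_add (by linarith) (by linarith)]
        ring_nf
    rw [setLIntegral_congr_fun measurableSet_Iio hpt]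
    exact lintegral_add_left ((hm_meas.sub measurable_const).ennreal_ofReal) _
  -- Phi b = r + q
  have hPhib : Phi g b = r + q := by
    rw [hPhi b, hr_def, hq_def]
    have hunion : Iio a ∪ Ico a b = Iio b := by
      ext x
      simp only [Set.mem_union, Set.mem_Iio, Set.mem_Ico]
      constructor
      · rintro (h | ⟨h1, h2⟩)
        · linarith
        · exact h2
      · intro h; rcases lt_or_ge x a with h' | h'
        · exact Or.inl h'
        · exact Or.inr ⟨h', h⟩
    rw [← hunion, lintegral_union measurableSet_Ico
      (by simp [Set.disjoint_left, Set.mem_Iio, Set.mem_Ico]; intro x hx h; linarith)]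
    congr 1
    rw [← Measure.restrict_congr_set Ioo_ae_eq_Ico]
  -- I₁ = q + e
  have hI1 : (∫⁻ x in Ioo a b, ENNReal.ofReal (m x - x)) = q + e := by
    rw [hq_def, he_def]
    have hpt : ∀ x ∈ Ioo a b,
        ENNReal.ofReal (m x - x)
          = ENNReal.ofReal (m x - b) + ENNReal.ofReal (min (m x) b - x) := by
      intro x hx
      rcases le_total (m x) b with h | h
      · rw [min_eq_left h,
          show ENNReal.ofReal (m x - b) = 0 from ENNReal.ofReal_eq_zero.mpr (by linarith),
          zero_add]
      · rw [min_eq_right h, ← ENNReal.ofReal_add (by linarith) (by linarith [hx.2])]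
        ring_nf
    rw [setLIntegral_congr_fun measurableSet_Ioo hpt]
    exact lintegral_add_left ((hm_meas.sub measurable_const).ennreal_ofReal) _
  -- I₂ = p + e
  have hI2 : (∫⁻ x in Ioo a b, ENNReal.ofReal (x - n x)) = p + e := by
    rw [hp_def, hswap2]
    have hpt : ∀ x ∈ Ioo a b,
        ENNReal.ofReal (x - n x)
          = ENNReal.ofReal (a - n x) + ENNReal.ofReal (x - max (n x) a) := by
      intro x hx
      rcases le_total (n x) a with h | h
      · rw [max_eq_right h, ← ENNReal.ofReal_add (by linarith) (by linarith [hx.1])]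
        ring_nf
      · rw [max_eq_left h,
          show ENNReal.ofReal (a - n x) = 0 from ENNReal.ofReal_eq_zero.mpr (by linarith),
          zero_add]
    rw [setLIntegral_congr_fun measurableSet_Ioo hpt]
    exact lintegral_add_left ((measurable_const.sub hn_meas).ennreal_ofReal) _
  -- finiteness
  have hIoo_fin : volume (Ioo a b) ≠ ⊤ := by
    rw [Real.volume_Ioo]; exact ENNReal.ofReal_ne_top
  have hq_fin : q < ⊤ := J_lt_top _ (m b - b)
    (fun x hx => by have := hm_mono hx.2.le; linarith) hIoo_fin
  have hp_fin : p < ⊤ := J_lt_top _ (a - n a)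
    (fun x hx => by have := hn_mono hx.1.le; linarith) hIoo_fin
  have he_fin : e < ⊤ := J_lt_top _ (b - a)
    (fun x hx => by have := min_le_right (m x) b; linarith [hx.1]) hIoo_fin
  have hr_fin : r < ⊤ := by
    rw [hr_def]
    have hunion : (Iio a ∩ Iic (n b)) ∪ Ioo (n b) a = Iio a := by
      ext x
      simp only [Set.mem_union, Set.mem_inter_iff, Set.mem_Iio, Set.mem_Iic, Set.mem_Ioo]
      constructor
      · rintro (⟨h, _⟩ | ⟨_, h⟩) <;> exact h
      · intro h; rcases le_or_gt x (n b) with h' | h'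
        · exact Or.inl ⟨h, h'⟩
        · exact Or.inr ⟨h', h⟩
    rw [← hunion, lintegral_union measurableSet_Ioo
      (by simp [Set.disjoint_left]; intro x _ hx h; linarith)]
    have h0 : (∫⁻ x in Iio a ∩ Iic (n b), ENNReal.ofReal (m x - b)) = 0 := by
      rw [setLIntegral_congr_fun (measurableSet_Iio.inter measurableSet_Iic)
        (fun x hx => ?_), lintegral_zero]
      have hmb : ¬ b < m x := fun hc => absurd ((key x b).mpr hc) (not_lt.mpr hx.2)
      exact ENNReal.ofReal_eq_zero.mpr (by linarith [not_lt.mp hmb])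
    rw [h0, zero_add]
    exact J_lt_top _ (m a - b) (fun x hx => by have := hm_mono hx.2.le; linarith)
      (by rw [Real.volume_Ioo]; exact ENNReal.ofReal_ne_top)
  -- convert interval integral
  have conv : ∀ f : ℝ → ℝ, Continuous f → (∀ x, 0 ≤ f x) →
      ∫ x in a..b, f x = (∫⁻ x in Ioo a b, ENNReal.ofReal (f x)).toReal := by
    intro f hf hf0
    rw [intervalIntegral.integral_of_le hab.le,
      ← Measure.restrict_congr_set Ioo_ae_eq_Ioc,
      integral_eq_lintegral_of_nonneg_ae (ae_of_all _ hf0) hf.aestronglyMeasurable.restrict]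
  have hc1 : Continuous (fun x : ℝ => m x - x) := hm_cont.sub continuous_id
  have hc2 : Continuous (fun x : ℝ => x - n x) := continuous_id.sub hn_cont
  have hsum : (fun x => (g x - x) + (g.symm x - x)) = fun x => (m x - x) - (x - n x) := by
    funext x
    have := max_add_min (g x) (g.symm x)
    simp only [hm_def, hn_def]
    linarith
  rw [hsum, intervalIntegral.integral_sub
    (hc1.intervalIntegrable _ _) (hc2.intervalIntegrable _ _)]
  rw [conv _ hc1 (fun x => by linarith [hxm x]),
    conv _ hc2 (fun x => by linarith [hnx x])]
  rw [hI1, hI2, hPhia, hPhib]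
  rw [ENNReal.toReal_add hq_fin.ne he_fin.ne, ENNReal.toReal_add hp_fin.ne he_fin.ne,
    ENNReal.toReal_add hr_fin.ne hq_fin.ne, ENNReal.toReal_add hr_fin.ne hp_fin.ne]
  ring
end
end

section
/- Let μ be a finitely supported symmetric probability measure on Homeo⁺(ℝ) whose support generates a group G, and suppose the pair (G, μ) has the Derriennic property. Then every element g ∈ G is a Lipschitz map, and moreover for every g ∈ G the displacement function x ↦ g(x) − x is uniformly bounded, i.e. sup_{x∈ℝ} |g(x) − x| < ∞. In particular, each g₀ in the support of μ is Lipschitz with Lipschitz constant at most 1/μ(g₀). -/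
open scoped NNReal ENNReal
open MeasureTheory Filter Topology Set Function

noncomputable section

section DerriennicAux
open intervalIntegral

private lemma cell (g : H) {c d : ℝ} (hcd : c ≤ d) :
    |(∫ u in c..d, g u) + (∫ t in (g c)..(g d), g.symm t) - (d * g d - c * g c)| ≤
      (d - c) * (g d - g c) := by
  have hg : g c ≤ g d := g.monotone hcd
  have hint : IntervalIntegrable (⇑g) volume c d := g.continuous.intervalIntegrable _ _
  have hint2 : IntervalIntegrable (⇑g.symm) volume (g c) (g d) :=
    g.symm.continuous.intervalIntegrable _ _
  have h1 : (∫ u in c..d, g u) ≤ (d - c) * g d := by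
    have := integral_mono_on hcd hint (_root_.intervalIntegrable_const (c := g d))
      (fun u hu => g.monotone hu.2)
    simpa [smul_eq_mul] using this
  have h2 : (d - c) * g c ≤ ∫ u in c..d, g u := by
    have := integral_mono_on hcd (_root_.intervalIntegrable_const (c := g c)) hint
      (fun u hu => g.monotone hu.1)
    simpa [smul_eq_mul] using this
  have h3 : (∫ t in (g c)..(g d), g.symm t) ≤ (g d - g c) * d := by
    have := integral_mono_on hg hint2 (_root_.intervalIntegrable_const (c := d))
      (fun t ht => by
        have := g.symm.monotone ht.2
        simpa using this)
    simpa [smul_eq_mul] using this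
  have h4 : (g d - g c) * c ≤ ∫ t in (g c)..(g d), g.symm t := by
    have := integral_mono_on hg (_root_.intervalIntegrable_const (c := c)) hint2
      (fun t ht => by
        have := g.symm.monotone ht.1
        simpa using this)
    simpa [smul_eq_mul] using this
  rw [abs_le]
  constructor <;> nlinarith [h1, h2, h3, h4]

private lemma young_le (g : H) {a b : ℝ} (hab : a ≤ b) :
    (∫ u in a..b, g u) + (∫ t in (g a)..(g b), g.symm t) = b * g b - a * g a := by
  set A : ℝ := (∫ u in a..b, g u) + (∫ t in (g a)..(g b), g.symm t) - (b * g b - a * g a)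
    with hA
  have hKnn : 0 ≤ (b - a) * (g b - g a) :=
    mul_nonneg (sub_nonneg.2 hab) (sub_nonneg.2 (g.monotone hab))
  have key : ∀ n : ℕ, 0 < n → |A| ≤ (b - a) * (g b - g a) / n := by
    intro n hn
    have hn0 : (n : ℝ) ≠ 0 := Nat.cast_ne_zero.2 hn.ne'
    have hδnn : 0 ≤ (b - a) / n := div_nonneg (sub_nonneg.2 hab) (Nat.cast_nonneg n)
    set u : ℕ → ℝ := fun i => a + i * ((b - a) / n) with hu
    have hustep : ∀ i : ℕ, u (i + 1) - u i = (b - a) / n := by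
      intro i; simp only [hu]; push_cast; ring
    have humono : ∀ i : ℕ, u i ≤ u (i + 1) := by
      intro i
      rw [← sub_nonneg, hustep i]
      exact hδnn
    have hu0 : u 0 = a := by simp [hu]
    have hun : u n = b := by
      simp only [hu]
      field_simp
      ring
    have S1 : ∑ i ∈ Finset.range n, (∫ x in (u i)..(u (i+1)), g x) = ∫ x in a..b, g x := by
      rw [← hu0, ← hun]
      exact sum_integral_adjacent_intervals
        (fun k _ => g.continuous.intervalIntegrable _ _)
    have S2 : ∑ i ∈ Finset.range n, (∫ t in (g (u i))..(g (u (i+1))), g.symm t)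
        = ∫ t in (g a)..(g b), g.symm t := by
      rw [← hu0, ← hun]
      exact sum_integral_adjacent_intervals (a := fun i => g (u i))
        (fun k _ => g.symm.continuous.intervalIntegrable _ _)
    have S3 : ∑ i ∈ Finset.range n,
        (u (i+1) * g (u (i+1)) - u i * g (u i)) = b * g b - a * g a := by
      rw [Finset.sum_range_sub (fun i => u i * g (u i)), hu0, hun]
    have hAsum : A = ∑ i ∈ Finset.range n,
        ((∫ x in (u i)..(u (i+1)), g x) + (∫ t in (g (u i))..(g (u (i+1))), g.symm t)
          - (u (i+1) * g (u (i+1)) - u i * g (u i))) := by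
      rw [Finset.sum_sub_distrib, Finset.sum_add_distrib, S1, S2, S3, hA]
    calc |A| ≤ ∑ i ∈ Finset.range n,
        |(∫ x in (u i)..(u (i+1)), g x) + (∫ t in (g (u i))..(g (u (i+1))), g.symm t)
          - (u (i+1) * g (u (i+1)) - u i * g (u i))| := by
          rw [hAsum]; exact Finset.abs_sum_le_sum_abs _ _
      _ ≤ ∑ i ∈ Finset.range n, ((b - a) / n) * (g (u (i+1)) - g (u i)) := by
          refine Finset.sum_le_sum (fun i _ => ?_)
          have := cell g (humono i)
          calc _ ≤ (u (i+1) - u i) * (g (u (i+1)) - g (u i)) := this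
            _ = ((b - a) / n) * (g (u (i+1)) - g (u i)) := by rw [hustep i]
      _ = ((b - a) / n) * (g b - g a) := by
          rw [← Finset.mul_sum, Finset.sum_range_sub (fun i => g (u i)), hu0, hun]
      _ = (b - a) * (g b - g a) / n := by ring
  have hA0 : |A| ≤ 0 := by
    by_contra hpos
    push_neg at hpos
    obtain ⟨n, hn⟩ := exists_nat_gt ((b - a) * (g b - g a) / |A|)
    have hn0 : 0 < n := by
      have : (0:ℝ) ≤ (b - a) * (g b - g a) / |A| := div_nonneg hKnn hpos.le
      exact_mod_cast (this.trans_lt hn).trans_le (le_refl _) |> fun h => Nat.cast_pos.mp h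
    have h1 : (b - a) * (g b - g a) < n * |A| := (div_lt_iff₀ hpos).mp hn
    have h2 := key n hn0
    have h3 : (b - a) * (g b - g a) / n < |A| := by
      rw [div_lt_iff₀ (by positivity : (0:ℝ) < n)]
      linarith
    linarith
  have : A = 0 := abs_eq_zero.mp (le_antisymm hA0 (abs_nonneg _))
  rw [hA] at this
  linarith

private lemma young (g : H) (a b : ℝ) :
    (∫ u in a..b, g u) + (∫ t in (g a)..(g b), g.symm t) = b * g b - a * g a := by
  rcases le_total a b with h | h
  · exact young_le g h
  · have := young_le g h
    rw [integral_symm b a, integral_symm (g b) (g a)]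
    linarith

/-- `Fd g x = ∫_0^x (g(u) - u) du`, the integrated displacement. -/
private noncomputable def Fd (g : H) (x : ℝ) : ℝ := ∫ u in (0:ℝ)..x, (g u - u)

private lemma Fd_int (g : H) (a b : ℝ) :
    IntervalIntegrable (fun u => g u - u) volume a b :=
  (g.continuous.sub continuous_id).intervalIntegrable _ _

private lemma Fd_eq (g : H) (x : ℝ) :
    Fd g x = (∫ u in (0:ℝ)..x, g u) - x^2/2 := by
  rw [Fd, integral_sub (g.continuous.intervalIntegrable _ _) intervalIntegral.intervalIntegrable_id,
    integral_id]
  ring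

private lemma Fd_chasles (g : H) (a b : ℝ) :
    Fd g a + (∫ u in a..b, (g u - u)) = Fd g b :=
  integral_add_adjacent_intervals (Fd_int g 0 a) (Fd_int g a b)

/-- The conservation law: `Fd g⁻¹ x + Fd g (g⁻¹ x) + (x - g⁻¹ x)²/2` is constant. -/
private lemma Fd_conserved (g : H) (x : ℝ) :
    Fd g.symm x + Fd g (g.symm x) + (x - g.symm x)^2/2
      = ∫ t in (0:ℝ)..(g 0), g.symm t := by
  have hy : g (g.symm x) = x := g.apply_symm_apply x
  have hch : (∫ t in (0:ℝ)..(g 0), g.symm t) + (∫ t in (g 0)..x, g.symm t)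
      = ∫ t in (0:ℝ)..x, g.symm t :=
    integral_add_adjacent_intervals (g.symm.continuous.intervalIntegrable _ _)
      (g.symm.continuous.intervalIntegrable _ _)
  have hyoung := young g 0 (g.symm x)
  rw [hy] at hyoung
  rw [Fd_eq, Fd_eq]
  linear_combination hyoung - hch

/-- If the pair (G, μ) has the Derriennic property, then every
element of G is Lipschitz with uniformly bounded displacement; in particular every g₀
in the support of μ is Lipschitz with constant at most 1/μ(g₀). -/
theorem derriennic_implies_lipschitz_and_bounded_displacement
    (μ : H → ℝ≥0)
    (hfin : {g : H | μ g ≠ 0}.Finite)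
    (hprob : ∑' g : H, (μ g : ℝ≥0∞) = 1)
    (hsymm : ∀ g : H, μ g = μ g⁻¹)
    (hder : ∀ x : ℝ, (∑ᶠ g : H, (μ g : ℝ) * g x) = x) :
    (∀ g ∈ Subgroup.closure {g : H | μ g ≠ 0},
      (∃ C : ℝ≥0, LipschitzWith C ⇑g) ∧ ∃ M : ℝ, ∀ x : ℝ, |g x - x| ≤ M) ∧
    ∀ g₀ : H, μ g₀ ≠ 0 → LipschitzWith (μ g₀)⁻¹ ⇑g₀ := by
  classical
  set s : Finset H := hfin.toFinset with hs
  have hmem : ∀ g : H, g ∈ s ↔ μ g ≠ 0 := fun g => by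
    rw [hs, Set.Finite.mem_toFinset]; rfl
  have hwnn : ∀ g : H, (0:ℝ) ≤ (μ g : ℝ) := fun g => (μ g).coe_nonneg
  have hwpos : ∀ g ∈ s, (0:ℝ) < (μ g : ℝ) := fun g hg => by
    have h := (hmem g).1 hg
    exact_mod_cast (pos_iff_ne_zero.mpr h : 0 < μ g)
  have hinv_mem : ∀ g : H, g ∈ s → (g⁻¹ : H) ∈ s := fun g hg =>
    (hmem _).2 (by rw [← hsymm g]; exact (hmem g).1 hg)
  have hsum1 : ∑ g ∈ s, (μ g : ℝ) = 1 := by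
    have h1 : ∑' g : H, (μ g : ℝ≥0∞) = ∑ g ∈ s, (μ g : ℝ≥0∞) :=
      tsum_eq_sum (fun b hb => by
        have hb' : ¬ μ b ≠ 0 := fun h => hb ((hmem b).2 h)
        simp [not_not.mp hb'])
    rw [h1] at hprob
    have h2 : ∑ g ∈ s, μ g = 1 := by exact_mod_cast hprob
    exact_mod_cast congrArg (fun t : ℝ≥0 => (t : ℝ)) h2
  have hder' : ∀ x : ℝ, ∑ g ∈ s, (μ g : ℝ) * g x = x := by
    intro x
    have hss : Function.support (fun g : H => (μ g : ℝ) * g x) ⊆ ↑s := ?_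
    · rw [← finsum_eq_finset_sum_of_support_subset _ hss]
      exact hder x
    intro g hg
    simp only [Function.mem_support] at hg
    refine Finset.mem_coe.2 ((hmem g).2 (fun h0 => hg ?_))
    simp [h0]
  have hdiff : ∀ a b : ℝ, ∑ g ∈ s, (μ g : ℝ) * (g b - g a) = b - a := by
    intro a b
    calc ∑ g ∈ s, (μ g : ℝ) * (g b - g a)
        = ∑ g ∈ s, ((μ g : ℝ) * g b - (μ g : ℝ) * g a) :=
          Finset.sum_congr rfl (fun g _ => by ring)
      _ = (∑ g ∈ s, (μ g : ℝ) * g b) - ∑ g ∈ s, (μ g : ℝ) * g a := Finset.sum_sub_distrib _ _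
      _ = b - a := by rw [hder' b, hder' a]
  have hkey : ∀ g ∈ s, ∀ {x y : ℝ}, x ≤ y → (μ g : ℝ) * (g y - g x) ≤ y - x := by
    intro g hg x y hxy
    rw [← hdiff x y]
    exact Finset.single_le_sum (f := fun g : H => (μ g : ℝ) * (g y - g x))
      (fun i _ => mul_nonneg (hwnn i) (sub_nonneg.2 (i.monotone hxy))) hg
  have hLip : ∀ g₀ : H, μ g₀ ≠ 0 → LipschitzWith (μ g₀)⁻¹ ⇑g₀ := by
    intro g hg
    have hgs : g ∈ s := (hmem g).2 hg
    have hw : (0:ℝ) < μ g := hwpos g hgs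
    have habs : ∀ {x y : ℝ}, x ≤ y → |g x - g y| ≤ ((μ g : ℝ))⁻¹ * |x - y| := by
      intro x y h
      have h1 := hkey g hgs h
      have h2 : g x ≤ g y := g.monotone h
      rw [abs_of_nonpos (by linarith), abs_of_nonpos (by linarith), inv_mul_eq_div,
        le_div_iff₀ hw]
      nlinarith
    refine LipschitzWith.of_dist_le_mul (fun x y => ?_)
    have hcoe : ((((μ g)⁻¹ : ℝ≥0)) : ℝ) = ((μ g : ℝ))⁻¹ := by push_cast; rfl
    rw [Real.dist_eq, Real.dist_eq, hcoe]
    rcases le_total x y with h | h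
    · exact habs h
    · rw [abs_sub_comm (g x), abs_sub_comm x]
      exact habs h
  -- integrated displacement identities
  have hFsum : ∀ x : ℝ, ∑ g ∈ s, (μ g : ℝ) * Fd g x = 0 := by
    intro x
    have hzero : ∀ u : ℝ, (∑ g ∈ s, (μ g : ℝ) * (g u - u)) = 0 := by
      intro u
      have h1 : ∑ g ∈ s, (μ g : ℝ) * (g u - u)
          = (∑ g ∈ s, (μ g : ℝ) * g u) - (∑ g ∈ s, (μ g : ℝ)) * u := by
        rw [Finset.sum_mul, ← Finset.sum_sub_distrib]
        exact Finset.sum_congr rfl (fun g _ => by ring)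
      rw [h1, hder' u, hsum1]; ring
    have h2 : ∑ g ∈ s, (μ g : ℝ) * Fd g x
        = ∫ u in (0:ℝ)..x, (∑ g ∈ s, (μ g : ℝ) * (g u - u)) := by
      rw [intervalIntegral.integral_finset_sum (fun g _ => (Fd_int g 0 x).const_mul _)]
      exact Finset.sum_congr rfl (fun g _ =>
        (intervalIntegral.integral_const_mul _ _).symm)
    rw [h2]
    simp only [hzero, intervalIntegral.integral_zero]
  have hFsymm_sum : ∀ x : ℝ, ∑ g ∈ s, (μ g : ℝ) * Fd g.symm x = 0 := by
    intro x
    refine Eq.trans (Finset.sum_nbij' (fun g : H => g⁻¹) (fun g : H => g⁻¹)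
      (fun a ha => hinv_mem a ha) (fun a ha => hinv_mem a ha)
      (fun a _ => inv_inv a) (fun a _ => inv_inv a) ?_) (hFsum x)
    intro a _
    rw [hsymm a]
    rfl
  set C : ℝ := ∑ g ∈ s, (μ g : ℝ) * (∫ t in (0:ℝ)..(g 0), g.symm t) with hCdef
  have hKsum : ∀ x : ℝ,
      (∑ g ∈ s, (μ g : ℝ) * (Fd g (g.symm x) + (x - g.symm x)^2/2)) = C := by
    intro x
    have h1 : ∀ g ∈ s, (μ g : ℝ) * (Fd g (g.symm x) + (x - g.symm x)^2/2)
        = (μ g : ℝ) * (∫ t in (0:ℝ)..(g 0), g.symm t) - (μ g : ℝ) * Fd g.symm x := by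
      intro g _
      linear_combination (μ g : ℝ) * (Fd_conserved g x)
    rw [Finset.sum_congr rfl h1, Finset.sum_sub_distrib, hFsymm_sum x, hCdef, sub_zero]
  have hlow : ∀ g ∈ s, ∀ x : ℝ,
      (x - g.symm x)^2/2 + (μ g : ℝ) * (x - g.symm x)^2/2 ≤ Fd g x - Fd g (g.symm x) := by
    intro g hg x
    set y := g.symm x with hy
    have hgy : g y = x := g.apply_symm_apply x
    have hchas := Fd_chasles g y x
    rcases le_total y x with h | h
    · have hpt : ∀ u ∈ Set.Icc y x, (x - u) + (μ g : ℝ) * (u - y) ≤ g u - u := by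
        intro u hu
        have h1 : x ≤ g u := by rw [← hgy]; exact g.monotone hu.1
        have h2 := hkey g⁻¹ (hinv_mem g hg) h1
        rw [← hsymm g] at h2
        have e1 : (g⁻¹ : H) (g u) = u := g.symm_apply_apply u
        have e2 : (g⁻¹ : H) x = y := rfl
        rw [e1, e2] at h2
        linarith
      have hint : (∫ u in y..x, ((x - u) + (μ g : ℝ) * (u - y)))
          ≤ ∫ u in y..x, (g u - u) := by
        refine integral_mono_on h ?_ (Fd_int g y x) hpt
        exact (((continuous_const.sub continuous_id).add
          (continuous_const.mul (continuous_id.sub continuous_const))).intervalIntegrable _ _)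
      have hval : (∫ u in y..x, ((x - u) + (μ g : ℝ) * (u - y)))
          = (x - y)^2/2 + (μ g : ℝ) * (x - y)^2/2 := by
        have i1 : IntervalIntegrable (fun u : ℝ => x - u) volume y x :=
          (continuous_const.sub continuous_id).intervalIntegrable _ _
        have i2 : IntervalIntegrable (fun u : ℝ => (μ g : ℝ) * (u - y)) volume y x :=
          (continuous_const.mul (continuous_id.sub continuous_const)).intervalIntegrable _ _
        have e1 : (∫ u in y..x, (x - u)) = (x - y)^2/2 := by
          rw [intervalIntegral.integral_sub _root_.intervalIntegrable_const
            intervalIntegral.intervalIntegrable_id, intervalIntegral.integral_const, integral_id]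
          simp only [smul_eq_mul]; ring
        have e2 : (∫ u in y..x, ((μ g : ℝ) * (u - y))) = (μ g : ℝ) * (x - y)^2/2 := by
          rw [intervalIntegral.integral_const_mul, intervalIntegral.integral_sub
            intervalIntegral.intervalIntegrable_id _root_.intervalIntegrable_const,
            integral_id, intervalIntegral.integral_const]
          simp only [smul_eq_mul]; ring
        rw [intervalIntegral.integral_add i1 i2, e1, e2]
      linarith
    · have hpt : ∀ u ∈ Set.Icc x y, g u - u ≤ (x - u) - (μ g : ℝ) * (y - u) := by
        intro u hu
        have h1 : g u ≤ x := by rw [← hgy]; exact g.monotone hu.2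
        have h2 := hkey g⁻¹ (hinv_mem g hg) h1
        rw [← hsymm g] at h2
        have e1 : (g⁻¹ : H) (g u) = u := g.symm_apply_apply u
        have e2 : (g⁻¹ : H) x = y := rfl
        rw [e1, e2] at h2
        linarith
      have hint : (∫ u in x..y, (g u - u))
          ≤ ∫ u in x..y, ((x - u) - (μ g : ℝ) * (y - u)) := by
        refine integral_mono_on h (Fd_int g x y) ?_ hpt
        exact (((continuous_const.sub continuous_id).sub
          (continuous_const.mul (continuous_const.sub continuous_id))).intervalIntegrable _ _)
      have hval : (∫ u in x..y, ((x - u) - (μ g : ℝ) * (y - u)))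
          = -((y - x)^2/2 + (μ g : ℝ) * (y - x)^2/2) := by
        have i1 : IntervalIntegrable (fun u : ℝ => x - u) volume x y :=
          (continuous_const.sub continuous_id).intervalIntegrable _ _
        have i2 : IntervalIntegrable (fun u : ℝ => (μ g : ℝ) * (y - u)) volume x y :=
          (continuous_const.mul (continuous_const.sub continuous_id)).intervalIntegrable _ _
        have e1 : (∫ u in x..y, (x - u)) = -((y - x)^2/2) := by
          rw [intervalIntegral.integral_sub _root_.intervalIntegrable_const
            intervalIntegral.intervalIntegrable_id, intervalIntegral.integral_const, integral_id]
          simp only [smul_eq_mul]; ring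
        have e2 : (∫ u in x..y, ((μ g : ℝ) * (y - u))) = (μ g : ℝ) * (y - x)^2/2 := by
          rw [intervalIntegral.integral_const_mul, intervalIntegral.integral_sub
            _root_.intervalIntegrable_const intervalIntegral.intervalIntegrable_id,
            intervalIntegral.integral_const, integral_id]
          simp only [smul_eq_mul]; ring
        rw [intervalIntegral.integral_sub i1 i2, e1, e2]
        ring
      have hchas2 := Fd_chasles g x y
      have hsq : (x - y)^2 = (y - x)^2 := by ring
      rw [hsq]
      linarith
  have hbound : ∀ g ∈ s, ∀ x : ℝ, ((μ g : ℝ))^2 * (x - g.symm x)^2 ≤ -2*C := by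
    intro g hg x
    have h1 : C ≤ ∑ g ∈ s, ((μ g : ℝ) * Fd g x - (μ g : ℝ)^2 * (x - g.symm x)^2/2) := by
      rw [← hKsum x]
      refine Finset.sum_le_sum (fun i hi => ?_)
      nlinarith [mul_le_mul_of_nonneg_left (hlow i hi x) (hwnn i)]
    have h2 : ∑ g ∈ s, ((μ g : ℝ) * Fd g x - (μ g : ℝ)^2 * (x - g.symm x)^2/2)
        = - ∑ g ∈ s, (μ g : ℝ)^2 * (x - g.symm x)^2/2 := by
      rw [Finset.sum_sub_distrib, hFsum x, zero_sub]
    have h3 : (μ g : ℝ)^2 * (x - g.symm x)^2/2 ≤ -C := by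
      refine le_trans (Finset.single_le_sum (f := fun i : H => (μ i : ℝ)^2 * (x - i.symm x)^2/2)
        (fun i _ => by positivity) hg) ?_
      linarith
    linarith
  have hdisp : ∀ g : H, μ g ≠ 0 → ∀ x : ℝ, |g x - x| ≤ Real.sqrt (-2*C) / (μ g : ℝ) := by
    intro g hg x
    have hgs : g ∈ s := (hmem g).2 hg
    have hw : (0:ℝ) < μ g := hwpos g hgs
    have hb := hbound g⁻¹ (hinv_mem g hgs) x
    rw [← hsymm g] at hb
    have e3 : (g⁻¹ : H).symm x = g x := rfl
    rw [e3] at hb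
    have h5 : ((μ g : ℝ))^2 * (g x - x)^2 ≤ -2*C := by nlinarith
    have hC0 : (0:ℝ) ≤ -2*C := le_trans (by positivity) h5
    have h6 : (g x - x)^2 ≤ (-2*C) / ((μ g : ℝ))^2 := by
      rw [le_div_iff₀ (by positivity)]
      nlinarith
    calc |g x - x| = Real.sqrt ((g x - x)^2) := (Real.sqrt_sq_eq_abs _).symm
      _ ≤ Real.sqrt ((-2*C) / ((μ g : ℝ))^2) := Real.sqrt_le_sqrt h6
      _ = Real.sqrt (-2*C) / (μ g : ℝ) := by
          rw [Real.sqrt_div hC0, Real.sqrt_sq hw.le]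
  refine ⟨?_, hLip⟩
  have main : ∀ g ∈ Subgroup.closure {g : H | μ g ≠ 0},
      ((∃ C : ℝ≥0, LipschitzWith C ⇑g) ∧ (∃ C : ℝ≥0, LipschitzWith C ⇑(g⁻¹ : H))) ∧
        ∃ M : ℝ, ∀ x : ℝ, |g x - x| ≤ M := by
    intro g hgcl
    induction hgcl using Subgroup.closure_induction with
    | mem x hx =>
        have hx' : μ x ≠ 0 := hx
        have hxinv : μ (x⁻¹) ≠ 0 := by rw [← hsymm x]; exact hx'
        exact ⟨⟨⟨_, hLip x hx'⟩, ⟨_, hLip x⁻¹ hxinv⟩⟩, ⟨_, hdisp x hx'⟩⟩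
    | one =>
        refine ⟨⟨⟨1, ?_⟩, ⟨1, ?_⟩⟩, ⟨0, fun x => ?_⟩⟩
        · exact LipschitzWith.id
        · rw [inv_one]; exact LipschitzWith.id
        · have : (1 : H) x = x := rfl
          rw [this]; simp
    | mul x y hxm hym ihx ihy =>
        obtain ⟨⟨⟨Cx, hCx⟩, ⟨Cx', hCx'⟩⟩, ⟨Mx, hMx⟩⟩ := ihx
        obtain ⟨⟨⟨Cy, hCy⟩, ⟨Cy', hCy'⟩⟩, ⟨My, hMy⟩⟩ := ihy
        refine ⟨⟨⟨Cx * Cy, hCx.comp hCy⟩, ⟨Cy' * Cx', ?_⟩⟩, ⟨Mx + My, fun z => ?_⟩⟩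
        · rw [mul_inv_rev]
          exact hCy'.comp hCx'
        · have e : (x * y : H) z = x (y z) := rfl
          rw [e]
          calc |x (y z) - z| ≤ |x (y z) - y z| + |y z - z| := abs_sub_le _ _ _
            _ ≤ Mx + My := add_le_add (hMx (y z)) (hMy z)
    | inv x hxm ih =>
        obtain ⟨⟨⟨Cx, hCx⟩, ⟨Cx', hCx'⟩⟩, ⟨Mx, hMx⟩⟩ := ih
        refine ⟨⟨⟨Cx', hCx'⟩, ⟨Cx, ?_⟩⟩, ⟨Mx, fun z => ?_⟩⟩
        · rw [inv_inv]; exact hCx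
        · have h := hMx ((x⁻¹ : H) z)
          have e : x ((x⁻¹ : H) z) = z := x.apply_symm_apply z
          rw [e] at h
          rw [abs_sub_comm]
          exact h
  exact fun g hg => ⟨(main g hg).1.1, (main g hg).2⟩

end DerriennicAux
end
end

section
/- Let G be an irreducible, finitely generated subgroup of Homeo⁺(ℝ). Then there exists a homeomorphism D : ℝ → ℝ such that for every g ∈ G, the map D ∘ g ∘ D⁻¹ is Lipschitz and has uniformly bounded displacement, i.e. sup_{x∈ℝ} |D(g(D⁻¹(x))) − x| < ∞. -/
open scoped NNReal ENNReal
open MeasureTheory Filter Topology Set Function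

set_option maxHeartbeats 1000000

noncomputable section

lemma tau_exists (M : ℝ ≃o ℝ) (hM : ∀ x, x < M x) :
    ∃ τ : ℝ → ℝ, StrictMono τ ∧ Continuous τ ∧
      Tendsto τ atTop atTop ∧ Tendsto τ atBot atBot ∧
      (∀ x, τ (M x) ≤ τ x + 2) ∧ (∀ x, τ x - 2 ≤ τ (M.symm x)) := by
  classical
  set a : ℤ → ℝ := fun n => (M ^ n : ℝ ≃o ℝ) 0 with ha_def
  have ha_step : ∀ n : ℤ, a (n + 1) = M (a n) := by
    intro n
    have h : M ^ (n + 1) = M * M ^ n := by rw [add_comm, zpow_add, zpow_one]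
    simp only [ha_def]
    rw [h]
    rfl
  have ha_mono : StrictMono a := by
    apply strictMono_int_of_lt_succ
    intro n
    rw [ha_step]
    exact hM (a n)
  have ha_stepdown : ∀ n : ℤ, a (n - 1) = M.symm (a n) := by
    intro n
    have := ha_step (n - 1)
    simp only [sub_add_cancel] at this
    rw [this, M.symm_apply_apply]
  -- unboundedness
  have ha_top : Tendsto a atTop atTop := by
    apply tendsto_atTop_atTop_of_monotone' ha_mono.monotone
    intro hbdd
    have ht : Tendsto a atTop (nhds (⨆ n, a n)) := tendsto_atTop_ciSup ha_mono.monotone hbdd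
    have ht1 : Tendsto (fun n : ℤ => a (n + 1)) atTop (nhds (⨆ n, a n)) :=
      ht.comp (tendsto_atTop_add_const_right atTop 1 tendsto_id)
    have ht2 : Tendsto (fun n : ℤ => M (a n)) atTop (nhds (M (⨆ n, a n))) :=
      (M.continuous.tendsto _).comp ht
    have heq : (fun n : ℤ => a (n + 1)) = fun n : ℤ => M (a n) := by
      funext n; exact ha_step n
    rw [heq] at ht1
    have : M (⨆ n, a n) = ⨆ n, a n := tendsto_nhds_unique ht2 ht1
    exact absurd this (ne_of_gt (hM _))
  have ha_bot : Tendsto a atBot atBot := by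
    apply tendsto_atBot_atBot_of_monotone' ha_mono.monotone
    intro hbdd
    have ht : Tendsto a atBot (nhds (⨅ n, a n)) := tendsto_atBot_ciInf ha_mono.monotone hbdd
    have ht1 : Tendsto (fun n : ℤ => a (n - 1)) atBot (nhds (⨅ n, a n)) :=
      ht.comp (tendsto_atBot_add_const_right atBot (-1) tendsto_id)
    have ht2 : Tendsto (fun n : ℤ => M.symm (a n)) atBot (nhds (M.symm (⨅ n, a n))) :=
      (M.symm.continuous.tendsto _).comp ht
    have heq : (fun n : ℤ => a (n - 1)) = fun n : ℤ => M.symm (a n) := by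
      funext n; exact ha_stepdown n
    rw [heq] at ht1
    have h5 : M.symm (⨅ n, a n) = ⨅ n, a n := tendsto_nhds_unique ht2 ht1
    have : M (⨅ n, a n) = ⨅ n, a n := by
      conv_lhs => rw [← h5]
      exact M.apply_symm_apply _
    exact absurd this (ne_of_gt (hM _))
  -- the bracket integer
  have hN : ∀ x : ℝ, ∃ n : ℤ, a n ≤ x ∧ x < a (n + 1) := by
    intro x
    have hbd : ∃ b : ℤ, ∀ z : ℤ, a z ≤ x → z ≤ b := by
      obtain ⟨n₀, hn₀⟩ := (ha_top.eventually_gt_atTop x).exists_forall_of_atTop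
      exact ⟨n₀, fun z hz => by
        by_contra h
        exact absurd hz (not_le.mpr (hn₀ z (le_of_not_ge h)))⟩
    have hin : ∃ z : ℤ, a z ≤ x := by
      obtain ⟨z, hz⟩ := (ha_bot.eventually_le_atBot x).exists
      exact ⟨z, hz⟩
    obtain ⟨n, hn1, hn2⟩ := Int.exists_greatest_of_bdd hbd hin
    refine ⟨n, hn1, ?_⟩
    by_contra h
    have := hn2 (n + 1) (le_of_not_gt h)
    omega
  choose N hN1 hN2 using hN
  have hNu : ∀ (n : ℤ) (x : ℝ), a n ≤ x → x < a (n + 1) → N x = n := by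
    intro n x h1 h2
    have e1 : N x < n + 1 := ha_mono.lt_iff_lt.mp (lt_of_le_of_lt (hN1 x) h2)
    have e2 : n < N x + 1 := ha_mono.lt_iff_lt.mp (lt_of_le_of_lt h1 (hN2 x))
    omega
  have hd : ∀ n : ℤ, (0:ℝ) < a (n + 1) - a n := fun n =>
    sub_pos.mpr (ha_mono (lt_add_one n))
  set τ : ℝ → ℝ := fun x => (N x : ℝ) + (x - a (N x)) / (a (N x + 1) - a (N x)) with hτ_def
  have hbra : ∀ x, (N x : ℝ) ≤ τ x ∧ τ x < N x + 1 := by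
    intro x
    constructor
    · have : 0 ≤ (x - a (N x)) / (a (N x + 1) - a (N x)) :=
        div_nonneg (sub_nonneg.mpr (hN1 x)) (le_of_lt (hd (N x)))
      simp only [hτ_def]; linarith
    · have : (x - a (N x)) / (a (N x + 1) - a (N x)) < 1 := by
        rw [div_lt_one (hd (N x))]
        have := hN2 x; linarith
      simp only [hτ_def]; linarith
  have hstrict : StrictMono τ := by
    intro x y hxy
    have hle : N x ≤ N y := by
      have : a (N x) < a (N y + 1) := lt_of_le_of_lt (hN1 x) (lt_of_lt_of_le hxy (le_of_lt (hN2 y)))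
      have := ha_mono.lt_iff_lt.mp this
      omega
    rcases eq_or_lt_of_le hle with heq | hlt
    · simp only [hτ_def, heq]
      have h9 : (x - a (N y)) / (a (N y + 1) - a (N y)) < (y - a (N y)) / (a (N y + 1) - a (N y)) := by
        apply div_lt_div_of_pos_right (by linarith) (hd (N y))
      linarith
    · have h8 : ((N x : ℝ) + 1) ≤ (N y : ℝ) := by
        have : N x + 1 ≤ N y := by omega
        exact_mod_cast this
      have := (hbra x).2
      have := (hbra y).1
      linarith
  have hsurj : Surjective τ := by
    intro y
    set n : ℤ := ⌊y⌋ with hn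
    set t : ℝ := y - n with ht
    have ht0 : 0 ≤ t := by
      have := Int.floor_le y
      simp only [ht, hn]; linarith
    have ht1 : t < 1 := by
      have := Int.lt_floor_add_one y
      simp only [ht, hn]; linarith
    set x : ℝ := a n + t * (a (n + 1) - a n) with hx
    have h1 : a n ≤ x := by
      have : 0 ≤ t * (a (n + 1) - a n) := mul_nonneg ht0 (le_of_lt (hd n))
      linarith
    have h2 : x < a (n + 1) := by
      have : t * (a (n + 1) - a n) < 1 * (a (n + 1) - a n) :=
        mul_lt_mul_of_pos_right ht1 (hd n)
      simp only [hx]; linarith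
    refine ⟨x, ?_⟩
    have hNx := hNu n x h1 h2
    simp only [hτ_def, hNx]
    have hdn := hd n
    field_simp
    ring
  have hcont : Continuous τ := by
    exact (StrictMono.orderIsoOfSurjective τ hstrict hsurj).continuous
  have htop : Tendsto τ atTop atTop := by
    rw [tendsto_atTop_atTop]
    intro b
    refine ⟨a ⌈b⌉, fun x hx => ?_⟩
    have h1 : a ⌈b⌉ < a (N x + 1) := lt_of_le_of_lt hx (hN2 x)
    have h2 : ⌈b⌉ ≤ N x := by have := ha_mono.lt_iff_lt.mp h1; omega
    calc b ≤ (⌈b⌉ : ℝ) := Int.le_ceil b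
      _ ≤ (N x : ℝ) := by exact_mod_cast h2
      _ ≤ τ x := (hbra x).1
  have hbot : Tendsto τ atBot atBot := by
    rw [tendsto_atBot_atBot]
    intro b
    refine ⟨a (⌊b⌋ - 1), fun x hx => ?_⟩
    have h1 : a (N x) ≤ a (⌊b⌋ - 1) := le_trans (hN1 x) hx
    have h2 : N x ≤ ⌊b⌋ - 1 := ha_mono.le_iff_le.mp h1
    have h3 : τ x < N x + 1 := (hbra x).2
    have : (N x : ℝ) + 1 ≤ (⌊b⌋ : ℝ) := by exact_mod_cast (by omega : N x + 1 ≤ ⌊b⌋)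
    have := Int.floor_le b
    linarith
  have hM2 : ∀ x, τ (M x) ≤ τ x + 2 := by
    intro x
    have h1 : a (N x + 1) ≤ M x := by rw [ha_step]; exact M.monotone (hN1 x)
    have h2 : M x < a (N x + 1 + 1) := by rw [ha_step]; exact M.strictMono (hN2 x)
    have hNMx := hNu (N x + 1) (M x) h1 h2
    have hb := (hbra (M x)).2
    rw [hNMx] at hb
    have hx1 := (hbra x).1
    push_cast at hb ⊢
    linarith
  refine ⟨τ, hstrict, hcont, htop, hbot, hM2, fun x => ?_⟩
  have := hM2 (M.symm x)
  rw [M.apply_symm_apply] at this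
  linarith

lemma summable_list {β : Type} [Fintype β] {u : ℕ → ℝ} (hu : ∀ n, 0 ≤ u n)
    (h : Summable fun n : ℕ => (Fintype.card β : ℝ) ^ n * u n) :
    Summable fun w : List β => u w.length := by
  have he : (fun w : List β => u w.length)
      = (fun p : Σ n, Fin n → β => u p.1) ∘ (List.equivSigmaTuple (α := β)) := rfl
  rw [he, Equiv.summable_iff]
  rw [summable_sigma_of_nonneg (fun p => hu p.1)]
  constructor
  · intro n; exact Summable.of_finite
  · apply h.congr
    intro n
    rw [show (∑' (y : Fin n → β), u (⟨n, y⟩ : Σ n, Fin n → β).fst) = ∑' (_ : Fin n → β), u n from rfl,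
      tsum_const]
    simp [Fintype.card_fun, nsmul_eq_mul]

lemma key_lemma (T : Finset H) (hT : T.Nonempty) (hsym : ∀ s ∈ T, s⁻¹ ∈ T)
    (hmov : ∀ x : ℝ, ∃ s ∈ T, x < s x) :
    ∃ D : ℝ ≃ₜ ℝ, ∀ s ∈ T,
      (∃ C : ℝ≥0, LipschitzWith C fun x : ℝ => D (s (D.symm x))) ∧
      ∃ K : ℝ, ∀ x : ℝ, |D (s (D.symm x)) - x| ≤ K := by
  classical
  -- the "max" homeomorphism M
  set Ms : ℝ → ℝ := fun x => T.sup' hT (fun s => s x) with hMs_def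
  have hMs_mono : StrictMono Ms := by
    intro x y hxy
    obtain ⟨s₀, hs₀, hs₀eq⟩ := T.exists_mem_eq_sup' hT (fun s => s x)
    calc Ms x = s₀ x := hs₀eq
      _ < s₀ y := s₀.strictMono hxy
      _ ≤ Ms y := Finset.le_sup' (fun g : H => g y) hs₀
  have hMs_surj : Surjective Ms := by
    intro y
    refine ⟨T.inf' hT (fun s => s.symm y), le_antisymm ?_ ?_⟩
    · apply Finset.sup'_le
      intro s hs
      have h1 : T.inf' hT (fun s => s.symm y) ≤ s.symm y := Finset.inf'_le _ hs
      calc s (T.inf' hT (fun s => s.symm y)) ≤ s (s.symm y) := s.monotone h1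
        _ = y := s.apply_symm_apply y
    · obtain ⟨s₀, hs₀, hs₀eq⟩ := T.exists_mem_eq_inf' hT (fun s => s.symm y)
      have : s₀ (T.inf' hT (fun s => s.symm y)) = y := by rw [hs₀eq, s₀.apply_symm_apply]
      calc y = s₀ (T.inf' hT (fun s => s.symm y)) := this.symm
        _ ≤ Ms _ := Finset.le_sup' (fun g : H => g (T.inf' hT (fun s => s.symm y))) hs₀
  set M : ℝ ≃o ℝ := StrictMono.orderIsoOfSurjective Ms hMs_mono hMs_surj with hM_def
  have hM_apply : ∀ x, M x = Ms x := fun _ => rfl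
  have hM_gt : ∀ x, x < M x := by
    intro x
    obtain ⟨s, hs, hlt⟩ := hmov x
    exact lt_of_lt_of_le hlt (Finset.le_sup' (fun g : H => g x) hs)
  have hle_M : ∀ s ∈ T, ∀ x, s x ≤ M x := fun s hs x => Finset.le_sup' (fun g : H => g x) hs
  have hge_M : ∀ s ∈ T, ∀ x, M.symm x ≤ s x := by
    intro s hs x
    rw [OrderIso.symm_apply_le]
    have := hle_M _ (hsym s hs) (s x)
    calc x = s⁻¹ (s x) := (s.symm_apply_apply x).symm
      _ ≤ M (s x) := this
  obtain ⟨τ, hτs, hτc, hτtop, hτbot, hτM, hτM'⟩ := tau_exists M hM_gt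
  -- iterated bounds
  have hτMn : ∀ (n : ℕ) (x : ℝ), τ ((M ^ n : H) x) ≤ τ x + 2 * n := by
    intro n
    induction n with
    | zero => intro x; simp
    | succ n ih =>
      intro x
      have h1 : (M ^ (n + 1) : H) x = (M ^ n : H) (M x) := by
        rw [pow_succ]; rfl
      rw [h1]
      have := ih (M x)
      have := hτM x
      push_cast
      linarith
  have hτMn' : ∀ (n : ℕ) (x : ℝ), τ x - 2 * n ≤ τ (((M ^ n)⁻¹ : H) x) := by
    intro n
    induction n with
    | zero => intro x; simp
    | succ n ih =>
      intro x
      have h1 : ((M ^ (n + 1))⁻¹ : H) x = (M⁻¹ : H) (((M ^ n)⁻¹ : H) x) := by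
        rw [pow_succ, mul_inv_rev]; rfl
      rw [h1]
      have h2 := ih x
      have h3 := hτM' (((M ^ n)⁻¹ : H) x)
      have h4 : (M⁻¹ : H) (((M ^ n)⁻¹ : H) x) = M.symm (((M ^ n)⁻¹ : H) x) := rfl
      rw [h4]
      push_cast
      linarith
  -- words
  set ev : List ↥T → H := fun w => (w.map Subtype.val).prod with hev_def
  have hev_nil : ∀ x : ℝ, ev [] x = x := fun x => rfl
  have hev_cons : ∀ (s : ↥T) (w : List ↥T) (x : ℝ), ev (s :: w) x = (s : H) (ev w x) := by
    intro s w x; simp [hev_def]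
  have hev_append : ∀ (w : List ↥T) (s : ↥T) (x : ℝ), ev (w ++ [s]) x = ev w ((s : H) x) := by
    intro w s x
    simp [hev_def, List.map_append]
  have hev_ub : ∀ (w : List ↥T) (x : ℝ), ev w x ≤ (M ^ w.length : H) x := by
    intro w
    induction w with
    | nil => intro x; simp [hev_nil]
    | cons s t ih =>
      intro x
      rw [hev_cons]
      have h1 : (s : H) (ev t x) ≤ M (ev t x) := hle_M _ s.2 _
      have h2 : M (ev t x) ≤ M ((M ^ t.length : H) x) := M.monotone (ih x)
      have h3 : M ((M ^ t.length : H) x) = (M ^ (t.length + 1) : H) x := by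
        rw [pow_succ']
        rfl
      calc (s : H) (ev t x) ≤ M (ev t x) := h1
        _ ≤ M ((M ^ t.length : H) x) := h2
        _ = (M ^ (s :: t).length : H) x := h3
  have hev_lb : ∀ (w : List ↥T) (x : ℝ), ((M ^ w.length)⁻¹ : H) x ≤ ev w x := by
    intro w
    induction w with
    | nil => intro x; simp [hev_nil]
    | cons s t ih =>
      intro x
      rw [hev_cons]
      have h1 : M.symm (ev t x) ≤ (s : H) (ev t x) := hge_M _ s.2 _
      have h2 : M.symm (((M ^ t.length)⁻¹ : H) x) ≤ M.symm (ev t x) := M.symm.monotone (ih x)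
      have h3 : ((M ^ ((s :: t).length))⁻¹ : H) x = M.symm (((M ^ t.length)⁻¹ : H) x) := by
        show ((M ^ (t.length + 1))⁻¹ : H) x = _
        rw [pow_succ, mul_inv_rev]
        rfl
      rw [h3]
      exact le_trans h2 h1
  have hub : ∀ (w : List ↥T) (x : ℝ), τ (ev w x) ≤ τ x + 2 * w.length := by
    intro w x
    exact le_trans (hτs.monotone (hev_ub w x)) (hτMn w.length x)
  have hlb : ∀ (w : List ↥T) (x : ℝ), τ x - 2 * w.length ≤ τ (ev w x) := by
    intro w x
    exact le_trans (hτMn' w.length x) (hτs.monotone (hev_lb w x))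
  -- constants
  set m : ℝ := (T.card : ℝ) with hm_def
  have hm1 : 1 ≤ m := by
    have := Finset.card_pos.mpr hT
    simp only [hm_def]
    exact_mod_cast this
  set r : ℝ := (2 * m)⁻¹ with hr_def
  have hr0 : 0 < r := by positivity
  have hmr : m * r = 1 / 2 := by
    rw [hr_def, mul_inv, mul_comm (2:ℝ)⁻¹ m⁻¹, ← mul_assoc, mul_inv_cancel₀ (ne_of_gt (by linarith)), one_mul, one_div]
  have h2mr : (2 * m) * r = 1 := by
    rw [hr_def]; exact mul_inv_cancel₀ (ne_of_gt (by linarith))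
  set c : List ↥T → ℝ := fun w => r ^ w.length with hc_def
  have hc0 : ∀ w, 0 < c w := fun w => pow_pos hr0 _
  -- master summability
  have hsuma : ∀ A B : ℝ, 0 ≤ A → 0 ≤ B →
      Summable (fun w : List ↥T => c w * (A + B * w.length)) := by
    intro A B hA hB
    apply summable_list (u := fun n => r ^ n * (A + B * n))
    · intro n; positivity
    · have hcard : (Fintype.card ↥T : ℝ) = m := by
        simp [hm_def, Fintype.card_coe]
      have heq : ∀ n : ℕ, (Fintype.card ↥T : ℝ) ^ n * (r ^ n * (A + B * n))
          = A * (1/2 : ℝ) ^ n + B * ((n : ℝ) ^ 1 * (1/2 : ℝ) ^ n) := by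
        intro n
        rw [hcard, ← mul_assoc, ← mul_pow, hmr]
        ring
      rw [funext heq]
      have h12 : |(1:ℝ)/2| < 1 := by rw [abs_of_pos] <;> norm_num
      apply Summable.add
      · exact (summable_geometric_of_lt_one (by norm_num) (by norm_num)).mul_left A
      · exact (summable_pow_mul_geometric_of_norm_lt_one 1
          (by rw [Real.norm_eq_abs]; exact h12)).mul_left B
  -- terms and D
  set term : List ↥T → ℝ → ℝ := fun w x => c w * (τ (ev w x) - τ (ev w 0)) with hterm_def
  have hterm_bound : ∀ w x, |term w x| ≤ c w * ((|τ x - τ 0|) + 4 * w.length) := by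
    intro w x
    rw [hterm_def, abs_mul, abs_of_pos (hc0 w)]
    apply mul_le_mul_of_nonneg_left _ (hc0 w).le
    rw [abs_le]
    have h1 := hub w x
    have h2 := hlb w x
    have h3 := hub w 0
    have h4 := hlb w 0
    have h5 := abs_le.mp (le_refl |τ x - τ 0|)
    constructor <;> [skip; skip] <;>
      · have h6 := neg_abs_le (τ x - τ 0)
        have h7 := le_abs_self (τ x - τ 0)
        linarith
  have hsummable_term : ∀ x, Summable (fun w => term w x) := by
    intro x
    apply Summable.of_norm_bounded (hsuma (|τ x - τ 0|) 4 (abs_nonneg _) (by norm_num))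
    intro w
    rw [Real.norm_eq_abs]
    exact hterm_bound w x
  set D : ℝ → ℝ := fun x => ∑' w, term w x with hD_def
  have hdiffsummable : ∀ x y, Summable (fun w => c w * (τ (ev w y) - τ (ev w x))) := by
    intro x y
    apply ((hsummable_term y).sub (hsummable_term x)).congr
    intro w
    simp only [hterm_def]
    ring
  have hDsub : ∀ x y : ℝ, D y - D x = ∑' w, c w * (τ (ev w y) - τ (ev w x)) := by
    intro x y
    rw [hD_def, ← Summable.tsum_sub (hsummable_term y) (hsummable_term x)]
    apply tsum_congr
    intro w
    simp only [hterm_def]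
    ring
  have hdiff_nonneg : ∀ x y : ℝ, x ≤ y → ∀ w, 0 ≤ c w * (τ (ev w y) - τ (ev w x)) := by
    intro x y hxy w
    apply mul_nonneg (hc0 w).le
    have : ev w x ≤ ev w y := (ev w).monotone hxy
    have := hτs.monotone this
    linarith
  have hnil : ∀ x y : ℝ, c [] * (τ (ev [] y) - τ (ev [] x)) = τ y - τ x := by
    intro x y
    simp [hc_def, hev_nil]
  have hDdiff_ge : ∀ x y : ℝ, x ≤ y → τ y - τ x ≤ D y - D x := by
    intro x y hxy
    rw [hDsub x y]
    rw [← hnil x y]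
    exact Summable.le_tsum (hdiffsummable x y) [] (fun w _ => hdiff_nonneg x y hxy w)
  have hDmono : StrictMono D := by
    intro x y hxy
    have := hDdiff_ge x y hxy.le
    have := hτs hxy
    linarith
  have hD0 : D 0 = 0 := by
    have h : (fun w : List ↥T => term w 0) = fun _ => (0:ℝ) := by
      funext w; simp [hterm_def]
    show (∑' w, term w 0) = 0
    rw [h, tsum_zero]
  have hDtop : Tendsto D atTop atTop := by
    apply tendsto_atTop_mono' atTop (f₁ := fun x => τ x - τ 0)
    · filter_upwards [eventually_ge_atTop (0:ℝ)] with x hx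
      have := hDdiff_ge 0 x hx
      rw [hD0] at this
      linarith
    · exact tendsto_atTop_add_const_right atTop (-τ 0) hτtop
  have hDbot : Tendsto D atBot atBot := by
    apply tendsto_atBot_mono' atBot (f₁ := fun x => τ x - τ 0)
    · filter_upwards [eventually_le_atBot (0:ℝ)] with x hx
      have := hDdiff_ge x 0 hx
      rw [hD0] at this
      linarith
    · exact tendsto_atBot_add_const_right atBot (-τ 0) hτbot
  have hDcont : Continuous D := by
    rw [continuous_iff_continuousAt]
    intro x₀
    set R : ℝ := |x₀| + 1 with hR_def
    have hR0 : 0 < R := by positivity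
    set cl : ℝ → ℝ := fun x => max (-R) (min x R) with hcl_def
    have hclcont : Continuous cl := continuous_const.max (continuous_id.min continuous_const)
    have hclmem : ∀ x, -R ≤ cl x ∧ cl x ≤ R := by
      intro x
      refine ⟨le_max_left _ _, max_le (by linarith) (min_le_right _ _)⟩
    set A : ℝ := max |τ R| |τ (-R)| + |τ 0| with hA_def
    have hA0 : 0 ≤ A := by positivity
    have hAbound : ∀ x, |τ (cl x) - τ 0| ≤ A := by
      intro x
      have h1 : τ (cl x) ≤ τ R := hτs.monotone (hclmem x).2
      have h2 : τ (-R) ≤ τ (cl x) := hτs.monotone (hclmem x).1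
      have h3 : τ R ≤ |τ R| := le_abs_self _
      have h4 : -|τ (-R)| ≤ τ (-R) := neg_abs_le _
      have h5 : |τ R| ≤ max |τ R| |τ (-R)| := le_max_left _ _
      have h6 : |τ (-R)| ≤ max |τ R| |τ (-R)| := le_max_right _ _
      have h7 := le_abs_self (τ 0)
      have h8 := neg_abs_le (τ 0)
      rw [abs_le]
      constructor <;> [linarith; linarith]
    have key : Continuous (fun x => D (cl x)) := by
      rw [hD_def]
      apply continuous_tsum (u := fun w => c w * (A + 4 * w.length))
      · intro w
        apply continuous_const.mul
        exact (hτc.comp ((ev w).continuous.comp hclcont)).sub continuous_const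
      · exact hsuma A 4 hA0 (by norm_num)
      · intro w x
        rw [Real.norm_eq_abs]
        calc |term w (cl x)| ≤ c w * ((|τ (cl x) - τ 0|) + 4 * w.length) := hterm_bound w (cl x)
          _ ≤ c w * (A + 4 * w.length) := by
            apply mul_le_mul_of_nonneg_left _ (hc0 w).le
            have := hAbound x
            linarith
    have hev_eq : ∀ᶠ x in nhds x₀, D (cl x) = D x := by
      have hmem : Set.Ioo (-R) R ∈ nhds x₀ := by
        apply Ioo_mem_nhds
        · have := neg_abs_le x₀; linarith
        · have := le_abs_self x₀; linarith
      filter_upwards [hmem] with x hx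
      have : cl x = x := by
        rw [hcl_def]
        simp only [min_eq_left hx.2.le, max_eq_right hx.1.le]
      rw [this]
    exact (key.continuousAt).congr hev_eq
  have hDsurj : Surjective D := hDcont.surjective hDtop hDbot
  set Doi : ℝ ≃o ℝ := StrictMono.orderIsoOfSurjective D hDmono hDsurj with hDoi_def
  set Dh : ℝ ≃ₜ ℝ := Doi.toHomeomorph with hDh_def
  have hDh_apply : ∀ x, Dh x = D x := fun _ => rfl
  have hDh_symm : ∀ y, D (Dh.symm y) = y := fun y => Doi.apply_symm_apply y
  have hDh_symm_mono : Monotone (Dh.symm : ℝ → ℝ) := fun x y h => Doi.symm.monotone h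
  -- generator Lipschitz estimate
  have hlip : ∀ s (hs : s ∈ T), ∀ x y : ℝ, x ≤ y →
      D (s y) - D (s x) ≤ (2 * m) * (D y - D x) := by
    intro s hs x y hxy
    rw [hDsub (s x) (s y), hDsub x y]
    set g : List ↥T → ℝ := fun w' => c w' * (τ (ev w' y) - τ (ev w' x)) with hg_def
    have h1 : ∀ w : List ↥T, c w * (τ (ev w (s y)) - τ (ev w (s x)))
        = (2 * m) * g (w ++ [⟨s, hs⟩]) := by
      intro w
      simp only [hg_def, hev_append, List.length_append, List.length_singleton, hc_def]
      rw [pow_succ]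
      have h9 : (2 * m) * (r ^ w.length * r) = r ^ w.length := by
        rw [mul_comm (r ^ w.length) r, ← mul_assoc, h2mr, one_mul]
      calc r ^ w.length * (τ ((ev w) (s y)) - τ ((ev w) (s x)))
          = ((2 * m) * (r ^ w.length * r)) * (τ ((ev w) (s y)) - τ ((ev w) (s x))) := by
            rw [h9]
        _ = 2 * m * (r ^ w.length * r * (τ ((ev w) (s y)) - τ ((ev w) (s x)))) := by ring
    rw [tsum_congr h1, tsum_mul_left]
    apply mul_le_mul_of_nonneg_left _ (by linarith : (0:ℝ) ≤ 2 * m)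
    apply Summable.tsum_le_tsum_of_inj (fun w => w ++ [⟨s, hs⟩]) (List.append_left_injective _)
    · intro w _
      exact hdiff_nonneg x y hxy w
    · intro w
      exact le_refl _
    · exact (hdiffsummable x y).comp_injective (List.append_left_injective _)
    · exact hdiffsummable x y
  -- generator displacement estimate
  set K : ℝ := ∑' w : List ↥T, c w * (2 + 4 * w.length) with hK_def
  have hKsum : Summable (fun w : List ↥T => c w * (2 + 4 * w.length)) :=
    hsuma 2 4 (by norm_num) (by norm_num)
  have hdisp : ∀ s ∈ T, ∀ x : ℝ, |D (s x) - D x| ≤ K := by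
    intro s hs x
    rw [hDsub x (s x)]
    have hbd : ∀ w : List ↥T, |c w * (τ (ev w (s x)) - τ (ev w x))| ≤ c w * (2 + 4 * w.length) := by
      intro w
      rw [abs_mul, abs_of_pos (hc0 w)]
      apply mul_le_mul_of_nonneg_left _ (hc0 w).le
      have h1 : τ (ev w (s x)) ≤ τ (s x) + 2 * w.length := hub w (s x)
      have h2 : τ (s x) - 2 * w.length ≤ τ (ev w (s x)) := hlb w (s x)
      have h3 : τ (ev w x) ≤ τ x + 2 * w.length := hub w x
      have h4 : τ x - 2 * w.length ≤ τ (ev w x) := hlb w x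
      have h5 : τ (s x) ≤ τ (M x) := hτs.monotone (hle_M s hs x)
      have h6 : τ (M.symm x) ≤ τ (s x) := hτs.monotone (hge_M s hs x)
      have h7 := hτM x
      have h8 := hτM' x
      rw [abs_le]
      constructor <;> linarith
    have hsum1 : Summable fun w : List ↥T => c w * (τ (ev w (s x)) - τ (ev w x)) :=
      hdiffsummable x (s x)
    have hsum2 : Summable fun w : List ↥T => |c w * (τ (ev w (s x)) - τ (ev w x))| := hsum1.abs
    have hstep1 : |∑' w, c w * (τ (ev w (s x)) - τ (ev w x))|
        ≤ ∑' w, |c w * (τ (ev w (s x)) - τ (ev w x))| := by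
      have h10 := norm_tsum_le_tsum_norm
        (f := fun w : List ↥T => c w * (τ (ev w (s x)) - τ (ev w x)))
        (by simp only [Real.norm_eq_abs]; exact hsum2)
      simp only [Real.norm_eq_abs] at h10
      exact h10
    have hstep2 : (∑' w, |c w * (τ (ev w (s x)) - τ (ev w x))|) ≤ K :=
      Summable.tsum_le_tsum hbd hsum2 hKsum
    linarith
  -- assemble
  refine ⟨Dh, fun s hs => ⟨⟨Real.toNNReal (2 * m), ?_⟩, K, ?_⟩⟩
  · apply LipschitzWith.of_dist_le_mul
    intro u v
    have hcoe : (Real.toNNReal (2 * m) : ℝ) = 2 * m := Real.coe_toNNReal _ (by linarith)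
    rw [Real.dist_eq, Real.dist_eq, hcoe]
    wlog huv : u ≤ v generalizing u v
    · rw [abs_sub_comm (Dh (s (Dh.symm u))) _, abs_sub_comm u v]
      exact this v u (le_of_not_ge huv)
    have hy : Dh.symm u ≤ Dh.symm v := hDh_symm_mono huv
    have h1 : D (s (Dh.symm u)) ≤ D (s (Dh.symm v)) :=
      hDmono.monotone (s.monotone hy)
    have h2 := hlip s hs _ _ hy
    rw [hDh_symm u, hDh_symm v] at h2
    rw [hDh_apply, hDh_apply]
    rw [abs_of_nonpos (by linarith), abs_of_nonpos (by linarith)]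
    linarith
  · intro x
    have := hdisp s hs (Dh.symm x)
    rw [hDh_symm x] at this
    rw [hDh_apply]
    exact this

/-- Every irreducible, finitely generated subgroup of Homeo⁺(ℝ) is
topologically conjugate to a group of Lipschitz homeomorphisms with uniformly bounded
displacement. -/
theorem conjugate_to_lipschitz_bounded_displacement
    (G : Subgroup H) (hfg : G.FG)
    (hirr : ∀ x : ℝ, ∃ g ∈ G, g x ≠ x) :
    ∃ D : ℝ ≃ₜ ℝ, ∀ g ∈ G,
      (∃ C : ℝ≥0, LipschitzWith C fun x : ℝ => D (g (D.symm x))) ∧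
      ∃ M : ℝ, ∀ x : ℝ, |D (g (D.symm x)) - x| ≤ M := by
  classical
  obtain ⟨S, hScl, hSfin⟩ := (Subgroup.fg_iff G).mp hfg
  have : DecidableEq H := Classical.decEq H
  set T : Finset H := hSfin.toFinset ∪ hSfin.toFinset.image (fun s : H => s⁻¹) with hT_def
  have hST : ∀ s ∈ S, s ∈ T := by
    intro s hs
    rw [hT_def, Finset.mem_union]
    exact Or.inl (hSfin.mem_toFinset.mpr hs)
  have hsym : ∀ s ∈ T, s⁻¹ ∈ T := by
    intro s hs
    rw [hT_def, Finset.mem_union] at hs ⊢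
    rcases hs with h | h
    · exact Or.inr (Finset.mem_image.mpr ⟨s, h, rfl⟩)
    · obtain ⟨t, ht, rfl⟩ := Finset.mem_image.mp h
      simpa using Or.inl ht
  have hTG : ∀ s ∈ T, s ∈ G := by
    intro s hs
    rw [hT_def, Finset.mem_union] at hs
    rcases hs with h | h
    · have : s ∈ S := hSfin.mem_toFinset.mp h
      rw [← hScl]
      exact Subgroup.subset_closure this
    · obtain ⟨t, ht, rfl⟩ := Finset.mem_image.mp h
      have : t ∈ S := hSfin.mem_toFinset.mp ht
      rw [← hScl]
      exact inv_mem (Subgroup.subset_closure this)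
  -- stabilizer subgroup trick
  have hfixall : ∀ x : ℝ, (∀ s ∈ T, s x = x) → ∀ g ∈ G, g x = x := by
    intro x hfix g hg
    set stab : Subgroup H :=
      { carrier := {h : H | h x = x}
        one_mem' := rfl
        mul_mem' := by
          intro a b ha hb
          show a (b x) = x
          rw [hb, ha]
        inv_mem' := by
          intro a ha
          show a.symm x = x
          conv_lhs => rw [← ha]
          exact a.symm_apply_apply x } with hstab_def
    have hsub : S ⊆ (stab : Set H) := by
      intro s hs
      exact hfix s (hST s hs)
    have : G ≤ stab := by
      rw [← hScl]
      exact (Subgroup.closure_le stab).mpr hsub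
    exact this hg
  have hmov : ∀ x : ℝ, ∃ s ∈ T, x < s x := by
    intro x
    obtain ⟨g, hg, hgx⟩ := hirr x
    have hex : ∃ s ∈ T, s x ≠ x := by
      by_contra h
      push_neg at h
      exact hgx (hfixall x h g hg)
    obtain ⟨s, hs, hsx⟩ := hex
    rcases lt_or_gt_of_ne hsx with h | h
    · refine ⟨s⁻¹, hsym s hs, ?_⟩
      have : s.symm (s x) < s.symm x := s.symm.strictMono h
      rw [s.symm_apply_apply] at this
      exact this
    · exact ⟨s, hs, h⟩
  have hT : T.Nonempty := by
    obtain ⟨s, hs, _⟩ := hmov 0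
    exact ⟨s, hs⟩
  obtain ⟨D, hD⟩ := key_lemma T hT hsym hmov
  -- products of generators
  have hP : ∀ l : List H, (∀ y ∈ l, y ∈ T) →
      (∃ C : ℝ≥0, LipschitzWith C fun x : ℝ => D (l.prod (D.symm x))) ∧
      ∃ M : ℝ, ∀ x : ℝ, |D (l.prod (D.symm x)) - x| ≤ M := by
    intro l
    induction l with
    | nil =>
      intro _
      have hfun : (fun x : ℝ => D ((List.prod [] : H) (D.symm x))) = fun x => x := by
        funext x
        show D (D.symm x) = x
        exact D.apply_symm_apply x
      constructor
      · exact ⟨1, by rw [hfun]; exact LipschitzWith.id⟩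
      · refine ⟨0, fun x => ?_⟩
        rw [congrFun hfun x]
        simp
    | cons s t ih =>
      intro hmem
      have hsT : s ∈ T := hmem s List.mem_cons_self
      have htT : ∀ y ∈ t, y ∈ T := fun y hy => hmem y (List.mem_cons_of_mem s hy)
      obtain ⟨⟨C2, h2⟩, ⟨M2, hM2⟩⟩ := ih htT
      obtain ⟨⟨C1, h1⟩, ⟨K1, hK1⟩⟩ := hD s hsT
      have hfun : (fun x : ℝ => D ((List.prod (s :: t) : H) (D.symm x)))
          = (fun x : ℝ => D (s (D.symm x))) ∘ (fun x : ℝ => D (t.prod (D.symm x))) := by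
        funext x
        show D ((s * t.prod : H) (D.symm x)) = D (s (D.symm (D (t.prod (D.symm x)))))
        rw [D.symm_apply_apply]
        rfl
      constructor
      · exact ⟨C1 * C2, by rw [hfun]; exact h1.comp h2⟩
      · refine ⟨K1 + M2, fun x => ?_⟩
        rw [congrFun hfun x]
        set y : ℝ := D (t.prod (D.symm x)) with hy_def
        have ha : |D (s (D.symm y)) - y| ≤ K1 := hK1 y
        have hb : |y - x| ≤ M2 := hM2 x
        calc |((fun x : ℝ => D (s (D.symm x))) ∘ fun x : ℝ => D (t.prod (D.symm x))) x - x|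
            = |D (s (D.symm y)) - x| := rfl
          _ ≤ |D (s (D.symm y)) - y| + |y - x| := abs_sub_le _ _ _
          _ ≤ K1 + M2 := add_le_add ha hb
  refine ⟨D, fun g hg => ?_⟩
  have hgcl : g ∈ Subgroup.closure (T : Set H) := by
    have h1 : G ≤ Subgroup.closure (T : Set H) := by
      rw [← hScl]
      apply Subgroup.closure_mono
      intro s hs
      exact Finset.mem_coe.mpr (hST s hs)
    exact h1 hg
  have hgm0 : g ∈ (Subgroup.closure (T : Set H)).toSubmonoid := hgcl
  rw [Subgroup.closure_toSubmonoid] at hgm0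
  obtain ⟨l, hl, hlprod⟩ := Submonoid.exists_list_of_mem_closure hgm0
  have hlT : ∀ y ∈ l, y ∈ T := by
    intro y hy
    rcases hl y hy with h | h
    · exact h
    · have h2 : y⁻¹ ∈ (T : Set H) := Set.mem_inv.mp h
      have h3 := hsym _ h2
      simpa using h3
  rw [← hlprod]
  exact hP l hlT
end
end

section
/- Let μ be a finitely supported symmetric probability measure on Homeo⁺(ℝ) such that the Lebesgue measure on ℝ is P-invariant, i.e. Σ_g μ(g)·g_*(Leb) = Leb. Then the pair (G, μ), where G is the group generated by the support of μ, has the Derriennic property: for every x ∈ ℝ, Σ_g μ(g)·g(x) = x. -/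
open scoped NNReal ENNReal
open MeasureTheory Filter Topology Set Function

noncomputable section

namespace DerriennicAux

lemma intInt (g : H) (a b : ℝ) : IntervalIntegrable (fun x => (g x : ℝ)) volume a b :=
  g.continuous.intervalIntegrable a b

lemma intIntSymm (g : H) (a b : ℝ) :
    IntervalIntegrable (fun x => (g.symm x : ℝ)) volume a b :=
  g.symm.continuous.intervalIntegrable a b

/-- The "Young defect" of an order isomorphism on an interval. -/
def D (g : H) (s t : ℝ) : ℝ :=
  (∫ x in s..t, (g x : ℝ)) + (∫ y in (g s)..(g t), (g.symm y : ℝ)) - (t * g t - s * g s)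

lemma D_add (g : H) (a b c : ℝ) : D g a c = D g a b + D g b c := by
  have h1 := intervalIntegral.integral_add_adjacent_intervals (intInt g a b) (intInt g b c)
  have h2 := intervalIntegral.integral_add_adjacent_intervals
    (intIntSymm g (g a) (g b)) (intIntSymm g (g b) (g c))
  unfold D
  linarith

lemma D_self (g : H) (a : ℝ) : D g a a = 0 := by simp [D]

lemma D_bound (g : H) {s t : ℝ} (h : s ≤ t) : |D g s t| ≤ (t - s) * (g t - g s) := by
  have hg : (g s : ℝ) ≤ g t := g.monotone h
  have h1 : (t - s) * g s ≤ ∫ x in s..t, (g x : ℝ) := by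
    have := intervalIntegral.integral_mono_on (f := fun _ : ℝ => (g s : ℝ))
      (g := fun x => (g x : ℝ)) h (intervalIntegrable_const) (intInt g s t)
      (fun x hx => g.monotone hx.1)
    simpa [smul_eq_mul, mul_comm] using this
  have h2 : (∫ x in s..t, (g x : ℝ)) ≤ (t - s) * g t := by
    have := intervalIntegral.integral_mono_on (f := fun x => (g x : ℝ))
      (g := fun _ : ℝ => (g t : ℝ)) h (intInt g s t) (intervalIntegrable_const)
      (fun x hx => g.monotone hx.2)
    simpa [smul_eq_mul, mul_comm] using this
  have h3 : (g t - g s) * s ≤ ∫ y in (g s)..(g t), (g.symm y : ℝ) := by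
    have := intervalIntegral.integral_mono_on (f := fun _ : ℝ => (s : ℝ))
      (g := fun y => (g.symm y : ℝ)) hg (intervalIntegrable_const) (intIntSymm g _ _)
      (fun y hy => by
        have : g.symm (g s) ≤ g.symm y := g.symm.monotone hy.1
        simpa using this)
    simpa [smul_eq_mul, mul_comm] using this
  have h4 : (∫ y in (g s)..(g t), (g.symm y : ℝ)) ≤ (g t - g s) * t := by
    have := intervalIntegral.integral_mono_on (f := fun y => (g.symm y : ℝ))
      (g := fun _ : ℝ => (t : ℝ)) hg (intIntSymm g _ _) (intervalIntegrable_const)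
      (fun y hy => by
        have : g.symm y ≤ g.symm (g t) := g.symm.monotone hy.2
        simpa using this)
    simpa [smul_eq_mul, mul_comm] using this
  rw [abs_le]
  constructor <;> (unfold D; nlinarith)

lemma D_eq_zero_of_le (g : H) {a b : ℝ} (hab : a ≤ b) : D g a b = 0 := by
  set C : ℝ := (b - a) * (g b - g a) with hC
  have hbound : ∀ n : ℕ, 1 ≤ n → |D g a b| ≤ C / n := by
    intro n hn
    have hn0 : (0 : ℝ) < n := by positivity
    set δ : ℝ := (b - a) / n with hδ
    have hδ0 : 0 ≤ δ := div_nonneg (by linarith) hn0.le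
    set t : ℕ → ℝ := fun i => a + i * δ with ht
    have htmono : ∀ i : ℕ, t i ≤ t (i + 1) := by
      intro i
      simp only [ht]
      push_cast
      nlinarith
    have hstep : ∀ i : ℕ, D g a (t (i + 1)) - D g a (t i) = D g (t i) (t (i + 1)) := by
      intro i
      have := D_add g a (t i) (t (i + 1))
      linarith
    have htel : D g a (t n) - D g a (t 0) = ∑ i ∈ Finset.range n, D g (t i) (t (i + 1)) := by
      rw [← Finset.sum_range_sub (fun i => D g a (t i)) n]
      exact (Finset.sum_congr rfl fun i _ => (hstep i).symm).symm
    have ht0 : t 0 = a := by simp [ht]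
    have htn : t n = b := by
      simp only [ht, hδ]
      field_simp
      ring
    have hDab : D g a b = ∑ i ∈ Finset.range n, D g (t i) (t (i + 1)) := by
      rw [← htel, ht0, htn, D_self]; ring
    have habs : |D g a b| ≤ ∑ i ∈ Finset.range n, |D g (t i) (t (i + 1))| := by
      rw [hDab]; exact Finset.abs_sum_le_sum_abs _ _
    have hterm : ∀ i ∈ Finset.range n, |D g (t i) (t (i + 1))|
        ≤ δ * (g (t (i + 1)) - g (t i)) := by
      intro i _
      have h := D_bound g (htmono i)
      have : t (i + 1) - t i = δ := by
        simp only [ht]; push_cast; ring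
      rwa [this] at h
    have hsum : ∑ i ∈ Finset.range n, δ * (g (t (i + 1)) - g (t i)) = δ * (g b - g a) := by
      rw [← Finset.mul_sum, Finset.sum_range_sub (fun i => (g (t i) : ℝ)), ht0, htn]
    have : |D g a b| ≤ δ * (g b - g a) := by
      calc |D g a b| ≤ ∑ i ∈ Finset.range n, |D g (t i) (t (i + 1))| := habs
        _ ≤ ∑ i ∈ Finset.range n, δ * (g (t (i + 1)) - g (t i)) :=
            Finset.sum_le_sum hterm
        _ = δ * (g b - g a) := hsum
    calc |D g a b| ≤ δ * (g b - g a) := this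
      _ = C / n := by rw [hδ, hC]; ring
  have hlim : Tendsto (fun n : ℕ => C / n) atTop (𝓝 0) :=
    tendsto_const_div_atTop_nhds_zero_nat C
  have h0 : |D g a b| ≤ 0 := by
    refine ge_of_tendsto hlim ?_
    filter_upwards [eventually_ge_atTop 1] with n hn
    exact hbound n hn
  have := abs_nonneg (D g a b)
  have habs0 : |D g a b| = 0 := le_antisymm h0 this
  exact abs_eq_zero.mp habs0

lemma D_eq_zero (g : H) (a b : ℝ) : D g a b = 0 := by
  rcases le_total a b with hab | hab
  · exact D_eq_zero_of_le g hab
  · have h1 := D_add g a b a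
    rw [D_self] at h1
    have h2 := D_eq_zero_of_le g hab
    linarith

/-- Young's identity for an order isomorphism of ℝ. -/
lemma young (g : H) (a b : ℝ) :
    (∫ x in a..b, (g x : ℝ)) + (∫ y in (g a)..(g b), (g.symm y : ℝ))
      = b * g b - a * g a := by
  have := D_eq_zero g a b
  unfold D at this
  linarith

/-- The nonnegative "excess area" functional. -/
def J (g : H) (t : ℝ) : ℝ := t * g t - t ^ 2 - ∫ y in t..(g t), (g.symm y : ℝ)

lemma J_eq (g : H) (t : ℝ) : J g t = ∫ y in t..(g t), (t - g.symm y) := by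
  rw [intervalIntegral.integral_sub (intervalIntegrable_const) (intIntSymm g _ _)]
  simp only [intervalIntegral.integral_const, smul_eq_mul, J]
  ring

lemma J_nonneg (g : H) (t : ℝ) : 0 ≤ J g t := by
  rw [J_eq]
  rcases le_total t (g t) with h | h
  · refine intervalIntegral.integral_nonneg h fun y hy => ?_
    have : g.symm y ≤ g.symm (g t) := g.symm.monotone hy.2
    simp only [OrderIso.symm_apply_apply] at this
    linarith
  · have heq : (∫ y in t..(g t), (t - g.symm y)) = ∫ y in (g t)..t, (g.symm y - t) := by
      rw [intervalIntegral.integral_symm, ← intervalIntegral.integral_neg]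
      congr 1
      funext y
      ring
    rw [heq]
    refine intervalIntegral.integral_nonneg h fun y hy => ?_
    have : g.symm (g t) ≤ g.symm y := g.symm.monotone hy.1
    simp only [OrderIso.symm_apply_apply] at this
    linarith

/-- Key identity: the displacement integral is a difference of the `J` functional. -/
lemma key_g (g : H) (a b : ℝ) :
    (∫ x in a..b, ((g x : ℝ) + g.symm x - 2 * x)) = J g b - J g a := by
  have hy := young g a b
  have c1 := intervalIntegral.integral_add_adjacent_intervals
    (intIntSymm g a (g a)) (intIntSymm g (g a) (g b))
  have c2 := intervalIntegral.integral_add_adjacent_intervals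
    (intIntSymm g a (g b)) (intIntSymm g (g b) b)
  have c3 : (∫ y in (g b)..b, (g.symm y : ℝ)) = -∫ y in b..(g b), (g.symm y : ℝ) :=
    intervalIntegral.integral_symm _ _
  have lhs : (∫ x in a..b, ((g x : ℝ) + g.symm x - 2 * x))
      = (∫ x in a..b, (g x : ℝ)) + (∫ x in a..b, (g.symm x : ℝ)) - (b ^ 2 - a ^ 2) := by
    rw [intervalIntegral.integral_sub ((intInt g a b).add (intIntSymm g a b))
      (by apply Continuous.intervalIntegrable; continuity),
      intervalIntegral.integral_add (intInt g a b) (intIntSymm g a b)]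
    have h2x : (∫ x in a..b, (2 * x : ℝ)) = b ^ 2 - a ^ 2 := by
      rw [intervalIntegral.integral_const_mul, integral_id]
      ring
    rw [h2x]
  rw [lhs]
  unfold J
  linarith

end DerriennicAux

open DerriennicAux

/-- If the Lebesgue measure is stationary for a finitely supported
symmetric probability measure μ on Homeo⁺(ℝ), then (G, μ) has the Derriennic property:
Σ_g μ(g)·g(x) = x for every x. -/
theorem derriennic_of_lebesgue_stationary
    (μ : H → ℝ≥0)
    (hfin : {g : H | μ g ≠ 0}.Finite)
    (hprob : ∑' g : H, (μ g : ℝ≥0∞) = 1)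
    (hsymm : ∀ g : H, μ g = μ g⁻¹)
    (hleb : Measure.sum (fun g : H => (μ g : ℝ≥0∞) • (volume : Measure ℝ).map g)
      = (volume : Measure ℝ)) :
    ∀ x : ℝ, (∑ᶠ g : H, (μ g : ℝ) * g x) = x := by
  classical
  set s : Finset H := hfin.toFinset with hs
  have hmem : ∀ g : H, g ∈ s ↔ μ g ≠ 0 := fun g => hfin.mem_toFinset
  have hnotmem : ∀ g : H, g ∉ s → μ g = 0 := by
    intro g hg
    by_contra h
    exact hg ((hmem g).mpr h)
  -- total mass is 1
  have hM : ∑ g ∈ s, ((μ g : ℝ)) = 1 := by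
    have h0 : ∀ g : H, g ∉ s → ((μ g : ℝ≥0∞)) = 0 := by
      intro g hg; rw [hnotmem g hg]; simp
    rw [tsum_eq_sum h0] at hprob
    have := congrArg ENNReal.toReal hprob
    rw [ENNReal.toReal_sum (fun g _ => ENNReal.coe_ne_top)] at this
    simpa using this
  -- stationarity in terms of sums
  have hstat : ∀ a b : ℝ, a ≤ b →
      ∑ g ∈ s, (μ g : ℝ) * (g.symm b - g.symm a) = b - a := by
    intro a b hab
    have h1 := congrArg (fun m : Measure ℝ => m (Set.Ioc a b)) hleb
    rw [Measure.sum_apply _ measurableSet_Ioc] at h1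
    have hterm : ∀ g : H, (((μ g : ℝ≥0∞) • (volume : Measure ℝ).map g) (Set.Ioc a b))
        = (μ g : ℝ≥0∞) * ENNReal.ofReal (g.symm b - g.symm a) := by
      intro g
      rw [Measure.smul_apply, smul_eq_mul,
        Measure.map_apply g.continuous.measurable measurableSet_Ioc]
      congr 1
      have hpre : (⇑g) ⁻¹' (Set.Ioc a b) = Set.Ioc (g.symm a) (g.symm b) := by
        ext x
        simp only [Set.mem_preimage, Set.mem_Ioc]
        constructor
        · rintro ⟨h1, h2⟩
          constructor
          · have := g.symm.strictMono h1
            simpa using this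
          · have := g.symm.monotone h2
            simpa using this
        · rintro ⟨h1, h2⟩
          constructor
          · have := g.strictMono h1
            simpa using this
          · have := g.monotone h2
            simpa using this
      rw [hpre, Real.volume_Ioc]
    rw [tsum_congr hterm] at h1
    have h0 : ∀ g : H, g ∉ s →
        (μ g : ℝ≥0∞) * ENNReal.ofReal (g.symm b - g.symm a) = 0 := by
      intro g hg; rw [hnotmem g hg]; simp
    rw [tsum_eq_sum h0, Real.volume_Ioc] at h1
    have h2 := congrArg ENNReal.toReal h1
    rw [ENNReal.toReal_sum (fun g _ => ENNReal.mul_ne_top ENNReal.coe_ne_top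
      ENNReal.ofReal_ne_top)] at h2
    rw [ENNReal.toReal_ofReal (by linarith)] at h2
    rw [← h2]
    refine Finset.sum_congr rfl fun g _ => ?_
    rw [ENNReal.toReal_mul, ENNReal.coe_toReal, ENNReal.toReal_ofReal]
    exact sub_nonneg.mpr (g.symm.monotone hab)
  -- the two averaged functions
  set G : ℝ → ℝ := fun x => ∑ g ∈ s, (μ g : ℝ) * g x with hGdef
  set Fi : ℝ → ℝ := fun x => ∑ g ∈ s, (μ g : ℝ) * g.symm x with hFidef
  have hFG : ∀ x : ℝ, Fi x = G x := by
    intro x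
    refine Finset.sum_nbij' (fun g => g⁻¹) (fun g => g⁻¹) ?_ ?_ ?_ ?_ ?_
    · intro g hg
      rw [hmem] at hg ⊢
      rwa [← hsymm g]
    · intro g hg
      rw [hmem] at hg ⊢
      rwa [hsymm g⁻¹, inv_inv]
    · intro g _; exact inv_inv g
    · intro g _; exact inv_inv g
    · intro g _
      rw [← hsymm g]
      rfl
  have hGdiff : ∀ a b : ℝ, a ≤ b → G b - G a = b - a := by
    intro a b hab
    have := hstat a b hab
    rw [← hFG b, ← hFG a]
    simp only [hFidef]
    rw [← Finset.sum_sub_distrib]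
    rw [← this]
    refine Finset.sum_congr rfl fun g _ => ?_
    ring
  set c : ℝ := G 0 with hc
  have hGx : ∀ x : ℝ, G x = x + c := by
    intro x
    rcases le_total 0 x with h | h
    · have := hGdiff 0 x h; linarith
    · have := hGdiff x 0 h; linarith
  -- pointwise identity for the combined integrand
  have hpt : ∀ x : ℝ, ∑ g ∈ s, (μ g : ℝ) * ((g x : ℝ) + g.symm x - 2 * x) = 2 * c := by
    intro x
    have expand : ∑ g ∈ s, (μ g : ℝ) * ((g x : ℝ) + g.symm x - 2 * x)
        = G x + Fi x - (∑ g ∈ s, (μ g : ℝ)) * (2 * x) := by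
      simp only [hGdef, hFidef, ← Finset.sum_add_distrib, ← Finset.sum_sub_distrib,
        Finset.sum_mul]
      refine Finset.sum_congr rfl fun g _ => ?_
      ring
    rw [expand, hM, hFG, hGx]
    ring
  -- integrated identity
  have hint : ∀ a b : ℝ, 2 * c * (b - a) = ∑ g ∈ s, (μ g : ℝ) * (J g b - J g a) := by
    intro a b
    have hinteg : ∀ g : H, g ∈ s → IntervalIntegrable
        (fun x : ℝ => (μ g : ℝ) * ((g x : ℝ) + g.symm x - 2 * x)) volume a b := by
      intro g _
      exact (continuous_const.mul ((g.continuous.add g.symm.continuous).sub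
        (continuous_const.mul continuous_id'))).intervalIntegrable a b
    have h2 : (∫ x in a..b, (∑ g ∈ s, (μ g : ℝ) * ((g x : ℝ) + g.symm x - 2 * x)))
        = ∑ g ∈ s, (μ g : ℝ) * (J g b - J g a) := by
      rw [intervalIntegral.integral_finset_sum hinteg]
      refine Finset.sum_congr rfl fun g _ => ?_
      rw [intervalIntegral.integral_const_mul, key_g]
    have h3 : (∫ x in a..b, (∑ g ∈ s, (μ g : ℝ) * ((g x : ℝ) + g.symm x - 2 * x)))
        = ∫ x in a..b, (2 * c : ℝ) := by
      apply intervalIntegral.integral_congr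
      intro x _
      exact hpt x
    rw [← h2, h3, intervalIntegral.integral_const, smul_eq_mul]
    ring
  set K : ℝ := ∑ g ∈ s, (μ g : ℝ) * J g 0 with hK
  have hKnn : 0 ≤ K :=
    Finset.sum_nonneg fun g _ => mul_nonneg (μ g).coe_nonneg (J_nonneg g 0)
  have hup : ∀ T : ℝ, 0 < T → 2 * c * T ≤ K := by
    intro T hT
    have h1 := hint (-T) 0
    have h2 : ∑ g ∈ s, (μ g : ℝ) * (J g 0 - J g (-T))
        = K - ∑ g ∈ s, (μ g : ℝ) * J g (-T) := by
      rw [hK, ← Finset.sum_sub_distrib]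
      refine Finset.sum_congr rfl fun g _ => ?_
      ring
    have h3 : 0 ≤ ∑ g ∈ s, (μ g : ℝ) * J g (-T) :=
      Finset.sum_nonneg fun g _ => mul_nonneg (μ g).coe_nonneg (J_nonneg g (-T))
    rw [h2] at h1
    have : 2 * c * (0 - -T) = 2 * c * T := by ring
    rw [this] at h1
    linarith
  have hdown : ∀ T : ℝ, 0 < T → -K ≤ 2 * c * T := by
    intro T hT
    have h1 := hint 0 T
    have h2 : ∑ g ∈ s, (μ g : ℝ) * (J g T - J g 0)
        = (∑ g ∈ s, (μ g : ℝ) * J g T) - K := by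
      rw [hK, ← Finset.sum_sub_distrib]
      refine Finset.sum_congr rfl fun g _ => ?_
      ring
    have h3 : 0 ≤ ∑ g ∈ s, (μ g : ℝ) * J g T :=
      Finset.sum_nonneg fun g _ => mul_nonneg (μ g).coe_nonneg (J_nonneg g T)
    rw [h2] at h1
    have : 2 * c * (T - 0) = 2 * c * T := by ring
    rw [this] at h1
    linarith
  have hc0 : c = 0 := by
    rcases lt_trichotomy c 0 with h | h | h
    · exfalso
      have hT : (0 : ℝ) < (K + 1) / (-2 * c) := by
        apply div_pos <;> linarith
      have hcne : c ≠ 0 := ne_of_lt h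
      have := hdown _ hT
      have heq : 2 * c * ((K + 1) / (-2 * c)) = -(K + 1) := by
        field_simp
      rw [heq] at this
      linarith
    · exact h
    · exfalso
      have hT : (0 : ℝ) < (K + 1) / (2 * c) := by
        apply div_pos <;> linarith
      have hcne : c ≠ 0 := ne_of_gt h
      have := hup _ hT
      have heq : 2 * c * ((K + 1) / (2 * c)) = K + 1 := by
        field_simp
      rw [heq] at this
      linarith
  intro x
  have hsupp : (Function.support fun g : H => (μ g : ℝ) * g x) ⊆ ↑s := by
    intro g hg
    simp only [Function.mem_support] at hg
    rw [Finset.mem_coe, hmem]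
    intro h0
    apply hg
    rw [h0]
    simp
  rw [finsum_eq_finset_sum_of_support_subset _ hsupp]
  have : G x = x + c := hGx x
  rw [hc0] at this
  simpa [hGdef] using this
end
end
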